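/- arXiv:1311.7307 — 3 statements merged into one kernel-verified Lean document; each statement's English description precedes it below -/
import Mathlib

section
/- Every DIME can be rewritten into an equivalent reduced DIME: for every DIME E over a finite alphabet Σ there exists a reduced DIME E' over Σ such that L(E') = L(E). -/
set_option autoImplicit false

universe u v w

/-- An unordered word over an alphabet `σ`: a multiset over `σ`,
viewed as a function giving the number of occurrences of each symbol. -/
def UWord (σ : Type u) : Type u := σ → ℕ

/-- The empty unordered word `ε`. -/
def UWord.zero {σ : Type u} : UWord σ := fun _ => 0

/-- Unordered concatenation (multiset union) of two unordered words. -/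
def UWord.add {σ : Type u} (w₁ w₂ : UWord σ) : UWord σ := fun a => w₁ a + w₂ a

/-- The unordered word consisting of a single occurrence of `a`. -/
def UWord.single {σ : Type u} [DecidableEq σ] (a : σ) : UWord σ :=
  fun b => if b = a then 1 else 0

/-- Unordered concatenation of a list of unordered words. -/
def listSum {σ : Type u} (l : List (UWord σ)) : UWord σ := l.foldr UWord.add UWord.zero

/-- An interval multiplicity `[lo,hi]` (with `hi ∈ ℕ ∪ {∞}`), where the flag
`opt` marks the variant `[lo,hi]?` that additionally allows zero iterations. -/
structure Iv : Type where
  lo : ℕ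
  hi : ℕ∞
  opt : Bool

/-- Membership of a number of iterations in the set denoted by an interval multiplicity. -/
def Iv.Mem (I : Iv) (n : ℕ) : Prop :=
  (I.lo ≤ n ∧ (n : ℕ∞) ≤ I.hi) ∨ (I.opt = true ∧ n = 0)

/-- The multiplicity `1 = [1,1]`. -/
def Iv.one : Iv := ⟨1, 1, false⟩
/-- The multiplicity `? = [0,1]`. -/
def Iv.qmark : Iv := ⟨0, 1, false⟩
/-- The multiplicity `+ = [1,∞]`. -/
def Iv.iplus : Iv := ⟨1, ⊤, false⟩
/-- The multiplicity `* = [0,∞]`. -/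
def Iv.istar : Iv := ⟨0, ⊤, false⟩

/-- An atom `(a₁^{I₁} || ⋯ || a_k^{I_k})`: a list of symbols, each with a
multiplicity `1` (flag `true`) or `?` (flag `false`). -/
abbrev Atom (σ : Type u) : Type u := List (σ × Bool)

/-- A clause `(A₁^{I₁} | ⋯ | A_k^{I_k})`: a list of atoms with interval multiplicities. -/
abbrev Clause (σ : Type u) : Type u := List (Atom σ × Iv)

/-- A disjunctive interval multiplicity expression `(D₁^{I₁} || ⋯ || D_k^{I_k})`
(as raw syntax; well-formedness is `DIME.WF`). -/
structure DIME (σ : Type u) : Type u where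
  clauses : List (Clause σ × Iv)

/-- Language of a single symbol with its multiplicity (`1` or `?`) inside an atom. -/
def atomEntryLang {σ : Type u} [DecidableEq σ] (p : σ × Bool) : Set (UWord σ) :=
  if p.2 = true then {UWord.single p.1} else {UWord.single p.1, UWord.zero}

/-- Unordered concatenation of the languages of the items of a list. -/
def listConcLang {σ : Type u} {α : Type v} (f : α → Set (UWord σ)) :
    List α → Set (UWord σ)
  | [] => {UWord.zero}
  | x :: xs => {w | ∃ w₁ ∈ f x, ∃ w₂ ∈ listConcLang f xs, w = w₁.add w₂}

/-- The language of an atom. -/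
def Atom.lang {σ : Type u} [DecidableEq σ] (A : Atom σ) : Set (UWord σ) :=
  listConcLang atomEntryLang A

/-- The language `L(E^I)` obtained by iterating a language `L` according to
an interval multiplicity `I`. -/
def iterLang {σ : Type u} (L : Set (UWord σ)) (I : Iv) : Set (UWord σ) :=
  {w | (∃ l : List (UWord σ),
          (∀ x ∈ l, x ∈ L) ∧ I.lo ≤ l.length ∧ (l.length : ℕ∞) ≤ I.hi ∧ w = listSum l) ∨
       (I.opt = true ∧ w = UWord.zero)}

/-- The language of a clause: disjunction of its atoms with intervals. -/
def Clause.lang {σ : Type u} [DecidableEq σ] (D : Clause σ) : Set (UWord σ) :=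
  {w | ∃ p ∈ D, w ∈ iterLang (Atom.lang p.1) p.2}

/-- The language of a DIME: the unordered concatenation of its clauses with intervals. -/
def DIME.lang {σ : Type u} [DecidableEq σ] (E : DIME σ) : Set (UWord σ) :=
  listConcLang (fun p => iterLang (Clause.lang p.1) p.2) E.clauses

/-- A clause is simple if all its atoms carry multiplicity `1` or `?`. -/
def Clause.Simple {σ : Type u} (D : Clause σ) : Prop :=
  ∀ p ∈ D, p.2 = Iv.one ∨ p.2 = Iv.qmark

/-- The list of all symbol occurrences in a DIME. -/
def DIME.symbols {σ : Type u} (E : DIME σ) : List σ :=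
  E.clauses.flatMap fun p => p.1.flatMap fun q => q.1.map Prod.fst

/-- Well-formedness of a DIME `(D₁^{I₁} || ⋯ || D_k^{I_k})`: each `D_i` is either a
simple clause with `I_i ∈ {+,*}`, or a clause with `I_i ∈ {1,?}`; moreover no symbol
occurs twice in the whole expression. -/
def DIME.WF {σ : Type u} (E : DIME σ) : Prop :=
  (∀ p ∈ E.clauses,
      (Clause.Simple p.1 ∧ (p.2 = Iv.iplus ∨ p.2 = Iv.istar)) ∨
      (p.2 = Iv.one ∨ p.2 = Iv.qmark)) ∧
  E.symbols.Nodup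

/-- Type 1 of a clause with interval in a reduced DIME:
`(A₁|…|A_k)^+` with `k ≥ 2` and every atom containing a symbol with multiplicity `1`. -/
def EntryType1 {σ : Type u} (D : Clause σ) (I : Iv) : Prop :=
  I = Iv.iplus ∧ 2 ≤ D.length ∧ ∀ p ∈ D, p.2 = Iv.one ∧ ∃ q ∈ p.1, q.2 = true

/-- Type 2 of a clause with interval in a reduced DIME:
`(A₁^{I₁}|…|A_k^{I_k})` where every atom contains a symbol with multiplicity `1`
and `0` belongs to no interval `I_i`. -/
def EntryType2 {σ : Type u} (D : Clause σ) (I : Iv) : Prop :=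
  I = Iv.one ∧ ∀ p ∈ D, (∃ q ∈ p.1, q.2 = true) ∧ ¬ p.2.Mem 0

/-- Type 3 of a clause with interval in a reduced DIME:
`(A₁^{I₁}|…|A_k^{I_k})` where `0` belongs to every interval `I_i`. -/
def EntryType3 {σ : Type u} (D : Clause σ) (I : Iv) : Prop :=
  I = Iv.one ∧ ∀ p ∈ D, p.2.Mem 0

/-- A DIME is reduced if each of its clauses with interval has type 1, 2 or 3. -/
def DIME.Reduced {σ : Type u} (E : DIME σ) : Prop :=
  ∀ p ∈ E.clauses, EntryType1 p.1 p.2 ∨ EntryType2 p.1 p.2 ∨ EntryType3 p.1 p.2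

instance : DecidableEq Iv := fun a b =>
  decidable_of_iff (a.lo = b.lo ∧ a.hi = b.hi ∧ a.opt = b.opt)
    (by cases a; cases b; simp [Iv.mk.injEq])

section Basic
variable {σ : Type} [DecidableEq σ]

instance : AddCommMonoid (UWord σ) := inferInstanceAs (AddCommMonoid (σ → ℕ))

lemma UWord.add_eq (w₁ w₂ : UWord σ) : w₁.add w₂ = w₁ + w₂ := rfl
lemma UWord.zero_eq : (UWord.zero : UWord σ) = 0 := rfl

lemma listSum_nil : listSum ([] : List (UWord σ)) = 0 := rfl
lemma listSum_cons (x : UWord σ) (l : List (UWord σ)) : listSum (x :: l) = x + listSum l := rfl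

lemma listSum_append (l₁ l₂ : List (UWord σ)) :
    listSum (l₁ ++ l₂) = listSum l₁ + listSum l₂ := by
  induction l₁ with
  | nil => simp [listSum_nil]
  | cons x l ih => simp [listSum_cons, ih, add_assoc]

lemma listSum_eq_zero {l : List (UWord σ)} (h : ∀ x ∈ l, x = UWord.zero) :
    listSum l = 0 := by
  induction l with
  | nil => rfl
  | cons x l ih =>
    rw [listSum_cons, h x (List.mem_cons_self), ih (fun y hy => h y (List.mem_cons_of_mem _ hy)),
      UWord.zero_eq, zero_add]

lemma listSum_replicate_zero (n : ℕ) :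
    listSum (List.replicate n (UWord.zero : UWord σ)) = 0 := by
  apply listSum_eq_zero; intro x hx; exact (List.eq_of_mem_replicate hx)

lemma listSum_split (A B : Set (UWord σ)) :
    ∀ l : List (UWord σ), (∀ x ∈ l, x ∈ A ∨ x ∈ B) →
    ∃ l₁ l₂, (∀ x ∈ l₁, x ∈ A) ∧ (∀ x ∈ l₂, x ∈ B) ∧ listSum l = listSum l₁ + listSum l₂
  | [], _ => ⟨[], [], by simp, by simp, by simp [listSum_nil]⟩
  | x :: l, h => by
    obtain ⟨l₁, l₂, h₁, h₂, hs⟩ := listSum_split A B l (fun y hy => h y (List.mem_cons_of_mem _ hy))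
    rcases h x (List.mem_cons_self) with hx | hx
    · refine ⟨x :: l₁, l₂, ?_, h₂, ?_⟩
      · intro y hy; rcases List.mem_cons.mp hy with rfl | hy
        · exact hx
        · exact h₁ y hy
      · rw [listSum_cons, listSum_cons, hs, add_assoc]
    · refine ⟨l₁, x :: l₂, h₁, ?_, ?_⟩
      · intro y hy; rcases List.mem_cons.mp hy with rfl | hy
        · exact hx
        · exact h₂ y hy
      · rw [listSum_cons, listSum_cons, hs, add_left_comm]

end Basic
set_option linter.unusedSectionVars false

section Iter
variable {σ : Type} [DecidableEq σ]

def ustar (L : Set (UWord σ)) : Set (UWord σ) := iterLang L Iv.istar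

lemma mem_ustar {L : Set (UWord σ)} {w : UWord σ} :
    w ∈ ustar L ↔ ∃ l : List (UWord σ), (∀ x ∈ l, x ∈ L) ∧ w = listSum l := by
  simp only [ustar, iterLang, Iv.istar, Set.mem_setOf_eq]
  constructor
  · rintro (⟨l, hl, -, -, rfl⟩ | ⟨h, -⟩)
    · exact ⟨l, hl, rfl⟩
    · simp at h
  · rintro ⟨l, hl, rfl⟩
    exact Or.inl ⟨l, hl, Nat.zero_le _, le_top, rfl⟩

lemma iterLang_one (L : Set (UWord σ)) : iterLang L Iv.one = L := by
  ext w
  simp only [iterLang, Iv.one, Set.mem_setOf_eq]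
  constructor
  · rintro (⟨l, hl, h1, h2, rfl⟩ | ⟨h, -⟩)
    · have h2' : l.length ≤ 1 := by exact_mod_cast h2
      have : l.length = 1 := le_antisymm h2' h1
      obtain ⟨a, rfl⟩ := List.length_eq_one_iff.mp this
      have : listSum [a] = a := by rw [listSum_cons, listSum_nil, add_zero]
      rw [this]; exact hl a (List.mem_cons_self)
    · simp at h
  · intro hw
    refine Or.inl ⟨[w], by simpa using hw, le_refl _, by norm_num, ?_⟩
    rw [listSum_cons, listSum_nil, add_zero]

lemma iterLang_qmark (L : Set (UWord σ)) : iterLang L Iv.qmark = {UWord.zero} ∪ L := by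
  ext w
  simp only [iterLang, Iv.qmark, Set.mem_setOf_eq, Set.mem_union, Set.mem_singleton_iff]
  constructor
  · rintro (⟨l, hl, -, h2, rfl⟩ | ⟨h, -⟩)
    · have h2' : l.length ≤ 1 := by exact_mod_cast h2
      match l, h2' with
      | [], _ => exact Or.inl rfl
      | [a], _ =>
        have : listSum [a] = a := by rw [listSum_cons, listSum_nil, add_zero]
        rw [this]; exact Or.inr (hl a (List.mem_cons_self))
    · simp at h
  · rintro (rfl | hw)
    · exact Or.inl ⟨[], by simp, Nat.zero_le _, by norm_num, rfl⟩
    · refine Or.inl ⟨[w], by simpa using hw, Nat.zero_le _, by norm_num, ?_⟩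
      rw [listSum_cons, listSum_nil, add_zero]

lemma iterLang_empty_iv (L : Set (UWord σ)) {J : Iv} (h1 : J.opt = false)
    (h2 : ¬ ((J.lo : ℕ∞) ≤ J.hi)) : iterLang L J = ∅ := by
  ext w
  simp only [iterLang, Set.mem_setOf_eq, Set.mem_empty_iff_false, iff_false]
  rintro (⟨l, -, ha, hb, -⟩ | ⟨h, -⟩)
  · exact h2 (le_trans (by exact_mod_cast ha) hb)
  · simp [h1] at h

lemma iterLang_iplus_empty : iterLang (∅ : Set (UWord σ)) Iv.iplus = ∅ := by
  ext w
  simp only [iterLang, Iv.iplus, Set.mem_setOf_eq, Set.mem_empty_iff_false, iff_false]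
  rintro (⟨l, hl, h1, -, -⟩ | ⟨h, -⟩)
  · match l, h1 with
    | x :: l, _ => exact hl x (List.mem_cons_self)
  · simp at h

lemma zero_mem_iterLang_lo0 (L : Set (UWord σ)) {J : Iv} (h : J.lo = 0) :
    UWord.zero ∈ iterLang L J :=
  Or.inl ⟨[], by simp, by simp [h], by simp, rfl⟩

lemma zero_mem_iterLang_opt (L : Set (UWord σ)) {J : Iv} (h : J.opt = true) :
    UWord.zero ∈ iterLang L J := Or.inr ⟨h, rfl⟩

lemma zero_mem_iterLang_zeroL {L : Set (UWord σ)} {J : Iv} (h0 : UWord.zero ∈ L)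
    (hne : J.opt = true ∨ (J.lo : ℕ∞) ≤ J.hi) : UWord.zero ∈ iterLang L J := by
  rcases hne with h | h
  · exact zero_mem_iterLang_opt L h
  · refine Or.inl ⟨List.replicate J.lo UWord.zero, ?_, by simp, by simp [h], ?_⟩
    · intro x hx; rw [List.eq_of_mem_replicate hx]; exact h0
    · exact (listSum_replicate_zero J.lo).symm

lemma iterLang_optify (L : Set (UWord σ)) (J : Iv) :
    iterLang L ⟨J.lo, J.hi, true⟩ = iterLang L J ∪ {UWord.zero} := by
  ext w
  simp only [iterLang, Set.mem_setOf_eq, Set.mem_union, Set.mem_singleton_iff]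
  constructor
  · rintro (h | ⟨-, rfl⟩)
    · exact Or.inl (Or.inl h)
    · exact Or.inr rfl
  · rintro ((h | ⟨-, rfl⟩) | rfl)
    · exact Or.inl h
    · exact Or.inr ⟨by trivial, rfl⟩
    · exact Or.inr ⟨by trivial, rfl⟩

lemma iterLang_iplus_eq {L : Set (UWord σ)} (h : UWord.zero ∈ L) :
    iterLang L Iv.iplus = ustar L := by
  ext w
  rw [mem_ustar]
  simp only [iterLang, Iv.iplus, Set.mem_setOf_eq]
  constructor
  · rintro (⟨l, hl, -, -, rfl⟩ | ⟨hh, -⟩)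
    · exact ⟨l, hl, rfl⟩
    · simp at hh
  · rintro ⟨l, hl, rfl⟩
    refine Or.inl ⟨UWord.zero :: l, ?_, by simp, le_top, ?_⟩
    · intro x hx; rcases List.mem_cons.mp hx with rfl | hx
      · exact h
      · exact hl x hx
    · rw [listSum_cons, UWord.zero_eq, zero_add]

lemma ustar_insert_zero (L : Set (UWord σ)) : ustar ({UWord.zero} ∪ L) = ustar L := by
  ext w
  rw [mem_ustar, mem_ustar]
  constructor
  · rintro ⟨l, hl, rfl⟩
    obtain ⟨l₁, l₂, h₁, h₂, hs⟩ := listSum_split {UWord.zero} L l hl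
    refine ⟨l₂, h₂, ?_⟩
    rw [hs, listSum_eq_zero h₁, zero_add]
  · rintro ⟨l, hl, rfl⟩
    exact ⟨l, fun x hx => Or.inr (hl x hx), rfl⟩

lemma ustar_iterLang_simple (L : Set (UWord σ)) {J : Iv}
    (h : J = Iv.one ∨ J = Iv.qmark) : ustar (iterLang L J) = ustar L := by
  rcases h with rfl | rfl
  · rw [iterLang_one]
  · rw [iterLang_qmark, ustar_insert_zero]

end Iter
section Conc
variable {σ : Type} [DecidableEq σ] {α : Type v}

lemma listConcLang_nil (f : α → Set (UWord σ)) :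
    listConcLang f [] = {UWord.zero} := rfl

lemma listConcLang_cons (f : α → Set (UWord σ)) (x : α) (xs : List α) :
    listConcLang f (x :: xs) = {w | ∃ w₁ ∈ f x, ∃ w₂ ∈ listConcLang f xs, w = w₁.add w₂} := rfl

lemma listConcLang_singleton (f : α → Set (UWord σ)) (x : α) :
    listConcLang f [x] = f x := by
  ext w
  rw [listConcLang_cons]
  simp only [listConcLang_nil, Set.mem_singleton_iff, Set.mem_setOf_eq]
  constructor
  · rintro ⟨w₁, h₁, w₂, rfl, rfl⟩
    rw [UWord.add_eq, UWord.zero_eq, add_zero]; exact h₁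
  · intro hw
    exact ⟨w, hw, UWord.zero, rfl, by rw [UWord.add_eq, UWord.zero_eq, add_zero]⟩

lemma listConcLang_append (f : α → Set (UWord σ)) (l₁ l₂ : List α) :
    listConcLang f (l₁ ++ l₂) =
      {w | ∃ w₁ ∈ listConcLang f l₁, ∃ w₂ ∈ listConcLang f l₂, w = w₁.add w₂} := by
  induction l₁ with
  | nil =>
    ext w
    simp only [List.nil_append, listConcLang_nil, Set.mem_singleton_iff, Set.mem_setOf_eq]
    constructor
    · intro hw
      exact ⟨UWord.zero, rfl, w, hw, by rw [UWord.add_eq, UWord.zero_eq, zero_add]⟩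
    · rintro ⟨w₁, rfl, w₂, h₂, rfl⟩
      rw [UWord.add_eq, UWord.zero_eq, zero_add]; exact h₂
  | cons x l ih =>
    ext w
    rw [List.cons_append, listConcLang_cons, listConcLang_cons]
    simp only [ih, Set.mem_setOf_eq]
    constructor
    · rintro ⟨w₁, h₁, w₂, ⟨u₁, hu₁, u₂, hu₂, rfl⟩, rfl⟩
      refine ⟨w₁.add u₁, ⟨w₁, h₁, u₁, hu₁, rfl⟩, u₂, hu₂, ?_⟩
      simp only [UWord.add_eq, add_assoc]
    · rintro ⟨w₁, ⟨u₁, hu₁, u₂, hu₂, rfl⟩, w₂, h₂, rfl⟩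
      refine ⟨u₁, hu₁, u₂.add w₂, ⟨u₂, hu₂, w₂, h₂, rfl⟩, ?_⟩
      simp only [UWord.add_eq, add_assoc]

lemma listConcLang_congr {f g : α → Set (UWord σ)} {l : List α}
    (h : ∀ x ∈ l, f x = g x) : listConcLang f l = listConcLang g l := by
  induction l with
  | nil => rfl
  | cons x l ih =>
    rw [listConcLang_cons, listConcLang_cons, h x (List.mem_cons_self),
      ih (fun y hy => h y (List.mem_cons_of_mem _ hy))]

lemma listConcLang_map {β : Type w} (f : β → Set (UWord σ)) (h : α → β) (l : List α) :
    listConcLang f (l.map h) = listConcLang (fun x => f (h x)) l := by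
  induction l with
  | nil => rfl
  | cons x l ih => rw [List.map_cons, listConcLang_cons, listConcLang_cons, ih]

lemma listConcLang_flatMap (f : α → Set (UWord σ)) (T : α → List α) (l : List α)
    (h : ∀ p ∈ l, listConcLang f (T p) = f p) :
    listConcLang f (l.flatMap T) = listConcLang f l := by
  induction l with
  | nil => rfl
  | cons p l ih =>
    rw [List.flatMap_cons, listConcLang_append, h p (List.mem_cons_self),
      ih (fun q hq => h q (List.mem_cons_of_mem _ hq)), listConcLang_cons]

lemma ustar_unionList (g : α → Set (UWord σ)) (l : List α) :
    ustar {w | ∃ p ∈ l, w ∈ g p} = listConcLang (fun p => ustar (g p)) l := by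
  induction l with
  | nil =>
    ext w
    rw [mem_ustar, listConcLang_nil]
    simp only [List.not_mem_nil, false_and, exists_false, Set.mem_setOf_eq,
      Set.mem_singleton_iff]
    constructor
    · rintro ⟨l, hl, rfl⟩
      have : ∀ x ∈ l, x = UWord.zero := fun x hx => absurd (hl x hx) (by simp)
      rw [listSum_eq_zero this]; rfl
    · rintro rfl
      exact ⟨[], by simp, rfl⟩
  | cons p l ih =>
    ext w
    rw [listConcLang_cons, mem_ustar]
    constructor
    · rintro ⟨L', hL', rfl⟩
      obtain ⟨l₁, l₂, h₁, h₂, hs⟩ :=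
        listSum_split (g p) {w | ∃ q ∈ l, w ∈ g q} L' (by
          intro x hx
          obtain ⟨q, hq, hxg⟩ := hL' x hx
          rcases List.mem_cons.mp hq with rfl | hq
          · exact Or.inl hxg
          · exact Or.inr ⟨q, hq, hxg⟩)
      refine ⟨listSum l₁, mem_ustar.mpr ⟨l₁, h₁, rfl⟩, listSum l₂, ?_, hs⟩
      rw [← ih]
      exact mem_ustar.mpr ⟨l₂, h₂, rfl⟩
    · rintro ⟨w₁, h₁, w₂, h₂, rfl⟩
      rw [← ih, mem_ustar] at h₂
      rw [mem_ustar] at h₁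
      obtain ⟨l₁, hl₁, rfl⟩ := h₁
      obtain ⟨l₂, hl₂, rfl⟩ := h₂
      refine ⟨l₁ ++ l₂, ?_, ?_⟩
      · intro x hx
        rcases List.mem_append.mp hx with hx | hx
        · exact ⟨p, List.mem_cons_self, hl₁ x hx⟩
        · obtain ⟨q, hq, hxg⟩ := hl₂ x hx
          exact ⟨q, List.mem_cons_of_mem _ hq, hxg⟩
      · rw [listSum_append, UWord.add_eq]

lemma flatMap_sublist {β : Type w} {l₁ l₂ : List α} (f : α → List β) (h : l₁.Sublist l₂) :
    (l₁.flatMap f).Sublist (l₂.flatMap f) := by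
  induction h with
  | slnil => exact List.Sublist.refl _
  | cons a _ ih =>
    rw [List.flatMap_cons]
    exact ih.trans (List.sublist_append_right _ _)
  | cons_cons a _ ih =>
    rw [List.flatMap_cons, List.flatMap_cons]
    exact List.Sublist.append (List.Sublist.refl _) ih

lemma flatMap_sublist_of_forall {β : Type w} {l : List α} {f g : α → List β}
    (h : ∀ x ∈ l, (f x).Sublist (g x)) : (l.flatMap f).Sublist (l.flatMap g) := by
  induction l with
  | nil => exact List.Sublist.refl _
  | cons x l ih =>
    rw [List.flatMap_cons, List.flatMap_cons]
    exact List.Sublist.append (h x (List.mem_cons_self))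
      (ih fun y hy => h y (List.mem_cons_of_mem _ hy))

end Conc
section Trans
variable {σ : Type} [DecidableEq σ]

lemma atom_lang_nil : Atom.lang ([] : Atom σ) = {UWord.zero} := rfl

lemma zero_mem_atom_lang {A : Atom σ} (h : ∀ r ∈ A, r.2 = false) :
    UWord.zero ∈ Atom.lang A := by
  induction A with
  | nil => exact rfl
  | cons r A ih =>
    refine ⟨UWord.zero, ?_, UWord.zero, ih (fun s hs => h s (List.mem_cons_of_mem _ hs)), rfl⟩
    simp [atomEntryLang, h r (List.mem_cons_self)]

lemma clause_lang_nil : Clause.lang ([] : Clause σ) = ∅ := by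
  ext w; simp [Clause.lang]

lemma clause_lang_singleton (q : Atom σ × Iv) :
    Clause.lang [q] = iterLang (Atom.lang q.1) q.2 := by
  ext w; simp [Clause.lang]

def pred (q : Atom σ × Iv) : Bool := q.2.opt || decide ((q.2.lo : ℕ∞) ≤ q.2.hi)

lemma mem_filter_pred {q : Atom σ × Iv} {D : Clause σ} :
    q ∈ D.filter pred ↔ q ∈ D ∧ (q.2.opt = true ∨ (q.2.lo : ℕ∞) ≤ q.2.hi) := by
  simp [List.mem_filter, pred]

lemma clause_lang_filter (D : Clause σ) :
    Clause.lang (D.filter pred) = Clause.lang D := by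
  ext w
  constructor
  · rintro ⟨q, hq, hw⟩; exact ⟨q, (List.mem_filter.mp hq).1, hw⟩
  · rintro ⟨q, hq, hw⟩
    by_cases hpq : pred q = true
    · exact ⟨q, List.mem_filter.mpr ⟨hq, hpq⟩, hw⟩
    · exfalso
      simp only [pred, Bool.or_eq_true, decide_eq_true_eq, not_or, Bool.not_eq_true] at hpq
      rw [iterLang_empty_iv _ hpq.1 hpq.2] at hw
      exact hw

/-- Language of an entry. -/
def eLang (p : Clause σ × Iv) : Set (UWord σ) := iterLang (Clause.lang p.1) p.2
/-- Symbols of an entry. -/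
def eSyms (p : Clause σ × Iv) : List σ := p.1.flatMap fun q => q.1.map Prod.fst

lemma ustar_clause (D : Clause σ) :
    ustar (Clause.lang D) =
      listConcLang (fun q => ustar (iterLang (Atom.lang q.1) q.2)) D :=
  ustar_unionList _ D

/-- The transformation of one entry into a list of reduced entries. -/
def Tent (p : Clause σ × Iv) : List (Clause σ × Iv) :=
  if p.2 = Iv.iplus ∨ p.2 = Iv.istar then
    if p.2 = Iv.iplus ∧ ∀ q ∈ p.1, q.2 = Iv.one ∧ ∃ r ∈ q.1, r.2 = true then
      if 2 ≤ p.1.length then [p]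
      else [(p.1.map (fun q => (q.1, Iv.iplus)), Iv.one)]
    else p.1.map (fun q => ([(q.1, Iv.istar)], Iv.one))
  else
    if p.1.filter pred = [] then
      if p.2.lo = 0 then [([([], Iv.qmark)], Iv.one)] else [([], Iv.one)]
    else if p.2.lo = 0 ∨ ∃ q ∈ p.1.filter pred,
        (q.2.lo = 0 ∨ q.2.opt = true ∨ ∀ r ∈ q.1, r.2 = false) then
      [((p.1.filter pred).map (fun q => (q.1, ⟨q.2.lo, q.2.hi, true⟩)), Iv.one)]
    else [(p.1.filter pred, Iv.one)]

lemma iv_one_ne_iplus : Iv.one ≠ Iv.iplus := by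
  simp [Iv.one, Iv.iplus, Iv.mk.injEq]
lemma iv_one_ne_istar : Iv.one ≠ Iv.istar := by
  simp [Iv.one, Iv.istar, Iv.mk.injEq]
lemma iv_qmark_ne_iplus : Iv.qmark ≠ Iv.iplus := by
  simp [Iv.qmark, Iv.iplus, Iv.mk.injEq]
lemma iv_qmark_ne_istar : Iv.qmark ≠ Iv.istar := by
  simp [Iv.qmark, Iv.istar, Iv.mk.injEq]

lemma clause_lang_optify {D₀ : Clause σ} (hne : D₀ ≠ []) :
    Clause.lang (D₀.map (fun q => (q.1, (⟨q.2.lo, q.2.hi, true⟩ : Iv)))) =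
      Clause.lang D₀ ∪ {UWord.zero} := by
  ext w
  constructor
  · rintro ⟨q', hq', hw⟩
    obtain ⟨q, hq, rfl⟩ := List.mem_map.mp hq'
    rw [iterLang_optify (Atom.lang q.1) q.2] at hw
    rcases hw with hw | hw
    · exact Or.inl ⟨q, hq, hw⟩
    · exact Or.inr hw
  · rintro (⟨q, hq, hw⟩ | hw)
    · refine ⟨(q.1, ⟨q.2.lo, q.2.hi, true⟩), List.mem_map.mpr ⟨q, hq, rfl⟩, ?_⟩
      rw [iterLang_optify (Atom.lang q.1) q.2]
      exact Or.inl hw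
    · match D₀, hne with
      | q :: D₀, _ =>
        refine ⟨(q.1, ⟨q.2.lo, q.2.hi, true⟩),
          List.mem_map.mpr ⟨q, List.mem_cons_self, rfl⟩, ?_⟩
        rw [Set.mem_singleton_iff] at hw
        rw [hw]
        exact zero_mem_iterLang_opt _ rfl

theorem Tent_lang (p : Clause σ × Iv)
    (hp : (Clause.Simple p.1 ∧ (p.2 = Iv.iplus ∨ p.2 = Iv.istar)) ∨
          (p.2 = Iv.one ∨ p.2 = Iv.qmark)) :
    listConcLang eLang (Tent p) = eLang p := by
  obtain ⟨D, I⟩ := p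
  simp only at hp ⊢
  by_cases hB : I = Iv.iplus ∨ I = Iv.istar
  · have hS : Clause.Simple D := by
      rcases hp with ⟨hS, -⟩ | h12
      · exact hS
      · exfalso
        rcases h12 with h | h <;> rcases hB with h' | h' <;> rw [h] at h'
        · exact iv_one_ne_iplus h'
        · exact iv_one_ne_istar h'
        · exact iv_qmark_ne_iplus h'
        · exact iv_qmark_ne_istar h'
    rw [Tent]
    simp only [if_pos hB]
    by_cases hpure : I = Iv.iplus ∧ ∀ q ∈ D, q.2 = Iv.one ∧ ∃ r ∈ q.1, r.2 = true
    · rw [if_pos hpure]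
      obtain ⟨hip, hq⟩ := hpure
      subst hip
      by_cases hlen : 2 ≤ D.length
      · rw [if_pos hlen, listConcLang_singleton]
      · rw [if_neg hlen, listConcLang_singleton]
        match D, hq, hlen with
        | [], _, _ =>
          show eLang ([], Iv.one) = eLang ([], Iv.iplus)
          simp only [eLang, clause_lang_nil, iterLang_one, iterLang_iplus_empty]
        | [q], hq, _ =>
          have h1 : q.2 = Iv.one := (hq q (List.mem_cons_self)).1
          show eLang ([(q.1, Iv.iplus)], Iv.one) = eLang ([q], Iv.iplus)
          simp only [eLang, iterLang_one, clause_lang_singleton, h1]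
        | q :: r :: t, _, hlen =>
          exact absurd (Nat.le_add_left 2 t.length) hlen
    · rw [if_neg hpure]
      have hz : iterLang (Clause.lang D) I = ustar (Clause.lang D) := by
        rcases hB with hI | hI
        · rw [hI]
          apply iterLang_iplus_eq
          have hex : ∃ q ∈ D, ¬(q.2 = Iv.one ∧ ∃ r ∈ q.1, r.2 = true) := by
            by_contra hc
            push_neg at hc
            exact hpure ⟨hI, hc⟩
          obtain ⟨q, hqD, hqn⟩ := hex
          rcases hS q hqD with h1 | h1
          · have hr : ¬ ∃ r ∈ q.1, r.2 = true := fun hh => hqn ⟨h1, hh⟩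
            have hall : ∀ r ∈ q.1, r.2 = false := by
              intro r hrq
              cases h : r.2 with
              | false => rfl
              | true => exact absurd ⟨r, hrq, h⟩ hr
            exact ⟨q, hqD, by rw [h1, iterLang_one]; exact zero_mem_atom_lang hall⟩
          · exact ⟨q, hqD, by rw [h1, iterLang_qmark]; exact Or.inl rfl⟩
        · rw [hI]; rfl
      calc listConcLang eLang (D.map (fun q => ([(q.1, Iv.istar)], Iv.one)))
          = listConcLang (fun q => ustar (Atom.lang q.1)) D := by
            rw [listConcLang_map]
            refine listConcLang_congr (fun q hqD => ?_)
            show eLang ([(q.1, Iv.istar)], Iv.one) = _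
            simp only [eLang, iterLang_one, clause_lang_singleton]
            rfl
        _ = listConcLang (fun q => ustar (iterLang (Atom.lang q.1) q.2)) D :=
            listConcLang_congr (fun q hqD => (ustar_iterLang_simple _ (hS q hqD)).symm)
        _ = ustar (Clause.lang D) := (ustar_clause D).symm
        _ = iterLang (Clause.lang D) I := hz.symm
  · have hI : I = Iv.one ∨ I = Iv.qmark := by
      rcases hp with ⟨-, h⟩ | h
      · exact absurd h hB
      · exact h
    rw [Tent]
    simp only [if_neg hB]
    have hL : Clause.lang D = Clause.lang (D.filter pred) := (clause_lang_filter D).symm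
    by_cases hE : D.filter pred = []
    · rw [if_pos hE]
      have hcl : Clause.lang D = ∅ := by rw [hL, hE, clause_lang_nil]
      by_cases h0 : I.lo = 0
      · have hIq : I = Iv.qmark := by
          rcases hI with rfl | rfl
          · exact absurd h0 (by simp [Iv.one])
          · rfl
        subst hIq
        rw [if_pos h0, listConcLang_singleton]
        show eLang ([([], Iv.qmark)], Iv.one) = eLang (D, Iv.qmark)
        simp only [eLang, iterLang_one, clause_lang_singleton, atom_lang_nil, hcl,
          iterLang_qmark]
        simp
      · have hIo : I = Iv.one := by
          rcases hI with rfl | rfl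
          · rfl
          · exact absurd rfl h0
        subst hIo
        rw [if_neg h0, listConcLang_singleton]
        show eLang ([], Iv.one) = eLang (D, Iv.one)
        simp only [eLang, clause_lang_nil, iterLang_one, hcl]
    · rw [if_neg hE]
      by_cases heps : I.lo = 0 ∨ ∃ q ∈ D.filter pred,
          (q.2.lo = 0 ∨ q.2.opt = true ∨ ∀ r ∈ q.1, r.2 = false)
      · rw [if_pos heps, listConcLang_singleton]
        show eLang (_, Iv.one) = eLang (D, I)
        simp only [eLang, iterLang_one]
        rw [clause_lang_optify hE, hL]
        rcases hI with hIo | hIq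
        · subst hIo
          rw [iterLang_one]
          have h0 : ¬ ((Iv.one).lo = 0) := by simp [Iv.one]
          have hatom : ∃ q ∈ D.filter pred,
              (q.2.lo = 0 ∨ q.2.opt = true ∨ ∀ r ∈ q.1, r.2 = false) := by
            rcases heps with h | h
            · exact absurd h h0
            · exact h
          obtain ⟨q, hqF, hq⟩ := hatom
          have hzero : UWord.zero ∈ Clause.lang (D.filter pred) := by
            have hpred := (mem_filter_pred.mp hqF).2
            rcases hq with hlo | hopt | hall
            · exact ⟨q, hqF, zero_mem_iterLang_lo0 _ hlo⟩
            · exact ⟨q, hqF, zero_mem_iterLang_opt _ hopt⟩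
            · exact ⟨q, hqF, zero_mem_iterLang_zeroL (zero_mem_atom_lang hall) hpred⟩
          rw [Set.union_eq_left.mpr (Set.singleton_subset_iff.mpr hzero)]
        · subst hIq
          rw [iterLang_qmark, Set.union_comm]
      · rw [if_neg heps, listConcLang_singleton]
        push_neg at heps
        have hIo : I = Iv.one := by
          rcases hI with rfl | rfl
          · rfl
          · exact absurd rfl heps.1
        subst hIo
        show eLang (_, Iv.one) = eLang (D, Iv.one)
        simp only [eLang, iterLang_one]
        exact hL.symm

end Trans
section Props
variable {σ : Type} [DecidableEq σ]

theorem Tent_props (p : Clause σ × Iv) :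
    ∀ x ∈ Tent p,
      ((Clause.Simple x.1 ∧ (x.2 = Iv.iplus ∨ x.2 = Iv.istar)) ∨
        (x.2 = Iv.one ∨ x.2 = Iv.qmark)) ∧
      (EntryType1 x.1 x.2 ∨ EntryType2 x.1 x.2 ∨ EntryType3 x.1 x.2) := by
  obtain ⟨D, I⟩ := p
  intro x hx
  rw [Tent] at hx
  simp only at hx
  by_cases hB : I = Iv.iplus ∨ I = Iv.istar
  · rw [if_pos hB] at hx
    by_cases hpure : I = Iv.iplus ∧ ∀ q ∈ D, q.2 = Iv.one ∧ ∃ r ∈ q.1, r.2 = true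
    · rw [if_pos hpure] at hx
      obtain ⟨hip, hq⟩ := hpure
      by_cases hlen : 2 ≤ D.length
      · rw [if_pos hlen, List.mem_singleton] at hx
        subst hx
        constructor
        · exact Or.inl ⟨fun q hqD => Or.inl (hq q hqD).1, Or.inl hip⟩
        · exact Or.inl ⟨hip, hlen, hq⟩
      · rw [if_neg hlen, List.mem_singleton] at hx
        subst hx
        refine ⟨Or.inr (Or.inl rfl), Or.inr (Or.inl ⟨rfl, ?_⟩)⟩
        intro q' hq'
        obtain ⟨q, hqD, rfl⟩ := List.mem_map.mp hq'
        refine ⟨(hq q hqD).2, ?_⟩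
        rintro (⟨h, -⟩ | ⟨h, -⟩)
        · exact absurd h (by simp [Iv.iplus])
        · exact absurd h (by simp [Iv.iplus])
    · rw [if_neg hpure] at hx
      obtain ⟨q, hqD, rfl⟩ := List.mem_map.mp hx
      refine ⟨Or.inr (Or.inl rfl), Or.inr (Or.inr ⟨rfl, ?_⟩)⟩
      intro r hr
      rw [List.mem_singleton] at hr
      subst hr
      exact Or.inl ⟨by simp [Iv.istar], by simp [Iv.istar]⟩
  · rw [if_neg hB] at hx
    by_cases hE : D.filter pred = []
    · rw [if_pos hE] at hx
      by_cases h0 : I.lo = 0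
      · rw [if_pos h0, List.mem_singleton] at hx
        subst hx
        refine ⟨Or.inr (Or.inl rfl), Or.inr (Or.inr ⟨rfl, ?_⟩)⟩
        intro r hr
        rw [List.mem_singleton] at hr
        subst hr
        exact Or.inl ⟨by simp [Iv.qmark], by simp [Iv.qmark]⟩
      · rw [if_neg h0, List.mem_singleton] at hx
        subst hx
        exact ⟨Or.inr (Or.inl rfl), Or.inr (Or.inr ⟨rfl, by simp⟩)⟩
    · rw [if_neg hE] at hx
      by_cases heps : I.lo = 0 ∨ ∃ q ∈ D.filter pred,
          (q.2.lo = 0 ∨ q.2.opt = true ∨ ∀ r ∈ q.1, r.2 = false)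
      · rw [if_pos heps, List.mem_singleton] at hx
        subst hx
        refine ⟨Or.inr (Or.inl rfl), Or.inr (Or.inr ⟨rfl, ?_⟩)⟩
        intro r hr
        obtain ⟨q, hqF, rfl⟩ := List.mem_map.mp hr
        exact Or.inr ⟨rfl, rfl⟩
      · rw [if_neg heps, List.mem_singleton] at hx
        subst hx
        push_neg at heps
        refine ⟨Or.inr (Or.inl rfl), Or.inr (Or.inl ⟨rfl, ?_⟩)⟩
        intro q hqF
        obtain ⟨-, h1, h2, h3⟩ :=
          (by
            have := heps.2 q hqF
            exact ⟨trivial, by simpa using this⟩ :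
            True ∧ q.2.lo ≠ 0 ∧ q.2.opt ≠ true ∧ ∃ r ∈ q.1, r.2 ≠ false)
        constructor
        · obtain ⟨r, hrq, hr⟩ := h3
          exact ⟨r, hrq, by
            cases h : r.2 with
            | false => exact absurd h hr
            | true => rfl⟩
        · rintro (⟨h, -⟩ | ⟨h, -⟩)
          · exact h1 (Nat.le_zero.mp h)
          · exact h2 h

theorem Tent_syms (p : Clause σ × Iv) :
    ((Tent p).flatMap eSyms).Sublist (eSyms p) := by
  obtain ⟨D, I⟩ := p
  rw [Tent]
  simp only
  by_cases hB : I = Iv.iplus ∨ I = Iv.istar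
  · rw [if_pos hB]
    by_cases hpure : I = Iv.iplus ∧ ∀ q ∈ D, q.2 = Iv.one ∧ ∃ r ∈ q.1, r.2 = true
    · rw [if_pos hpure]
      by_cases hlen : 2 ≤ D.length
      · rw [if_pos hlen]
        have : ([(D, I)].flatMap eSyms) = eSyms (D, I) := by
          simp [List.flatMap_cons]
        rw [this]
      · rw [if_neg hlen]
        have : ([((D.map (fun q => (q.1, Iv.iplus))), Iv.one)].flatMap eSyms)
            = eSyms (D, I) := by
          simp [List.flatMap_cons, eSyms, List.flatMap_map]
        rw [this]
    · rw [if_neg hpure]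
      have : ((D.map (fun q => ([(q.1, Iv.istar)], Iv.one))).flatMap eSyms)
          = eSyms (D, I) := by
        rw [List.flatMap_map]
        simp [eSyms, List.flatMap_cons]
      rw [this]
  · rw [if_neg hB]
    by_cases hE : D.filter pred = []
    · rw [if_pos hE]
      by_cases h0 : I.lo = 0
      · rw [if_pos h0]
        have : ([([([], Iv.qmark)], Iv.one)].flatMap eSyms) = ([] : List σ) := by
          simp [eSyms]
        rw [this]
        exact List.nil_sublist _
      · rw [if_neg h0]
        have : ([(([] : Clause σ), Iv.one)].flatMap eSyms) = ([] : List σ) := by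
          simp [eSyms]
        rw [this]
        exact List.nil_sublist _
    · rw [if_neg hE]
      have hsub : ((D.filter pred).flatMap (fun q => q.1.map Prod.fst)).Sublist
          (eSyms (D, I)) := flatMap_sublist _ (List.filter_sublist (l := D))
      by_cases heps : I.lo = 0 ∨ ∃ q ∈ D.filter pred,
          (q.2.lo = 0 ∨ q.2.opt = true ∨ ∀ r ∈ q.1, r.2 = false)
      · rw [if_pos heps]
        have : ([(((D.filter pred).map (fun q => (q.1, (⟨q.2.lo, q.2.hi, true⟩ : Iv)))),
            Iv.one)].flatMap eSyms)
            = (D.filter pred).flatMap (fun q => q.1.map Prod.fst) := by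
          simp [eSyms, List.flatMap_map]
        rw [this]
        exact hsub
      · rw [if_neg heps]
        have : ([((D.filter pred), Iv.one)].flatMap eSyms)
            = (D.filter pred).flatMap (fun q => q.1.map Prod.fst) := by
          simp [eSyms]
        rw [this]
        exact hsub

end Props

/-- Every DIME can be rewritten into an equivalent reduced DIME:
for every DIME `E` over a finite alphabet `σ` there exists a reduced DIME `E'`
over `σ` such that `L(E') = L(E)`. -/
theorem statement0 {σ : Type} [DecidableEq σ] [Fintype σ]
    (E : DIME σ) (hE : E.WF) :
    ∃ E' : DIME σ, E'.WF ∧ E'.Reduced ∧ DIME.lang E' = DIME.lang E := by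
  obtain ⟨hWF, hND⟩ := hE
  refine ⟨⟨E.clauses.flatMap Tent⟩, ⟨?_, ?_⟩, ?_, ?_⟩
  · intro x hx
    obtain ⟨p, hp, hxT⟩ := List.mem_flatMap.mp hx
    exact ((Tent_props p) x hxT).1
  · show ((E.clauses.flatMap Tent).flatMap eSyms).Nodup
    rw [List.flatMap_assoc]
    have hsub : (E.clauses.flatMap fun p => (Tent p).flatMap eSyms).Sublist
        (E.clauses.flatMap eSyms) :=
      flatMap_sublist_of_forall (fun p _ => Tent_syms p)
    exact hsub.nodup hND
  · intro x hx
    obtain ⟨p, hp, hxT⟩ := List.mem_flatMap.mp hx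
    exact ((Tent_props p) x hxT).2
  · exact listConcLang_flatMap eLang Tent E.clauses (fun p hp => Tent_lang p (hWF p hp))
end

section
/- For every unordered word w and every DIME E, w ∈ L(E) if and only if w ⊨ Δ_E. -/
set_option autoImplicit false

universe u v w

/-- Conflicting pairs of siblings `C_E` of a language of unordered words. -/
def Cset {σ : Type u} (L : Set (UWord σ)) : Set (σ × σ) :=
  {p | ∀ w ∈ L, ¬(w p.1 ≠ 0 ∧ w p.2 ≠ 0)}

/-- Extended cardinality map `N_E` of a language of unordered words. -/
def Nset {σ : Type u} (L : Set (UWord σ)) : Set (σ × ℕ) :=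
  {p | ∃ w ∈ L, w p.1 = p.2}

/-- Collections of required symbols `P_E` of a language of unordered words. -/
def Pset {σ : Type u} (L : Set (UWord σ)) : Set (Set σ) :=
  {X | ∀ w ∈ L, ∃ a ∈ X, w a ≠ 0}

/-- Counting dependencies `K_E` of a language of unordered words. -/
def Kset {σ : Type u} (L : Set (UWord σ)) : Set (σ × σ) :=
  {p | ∀ w ∈ L, w p.2 ≤ w p.1}

/-- Satisfaction `w ⊨ Δ_E` of the characterizing tuple `(C_E, N_E, P_E, K_E)`
of the language `L = L(E)` by an unordered word `w`. -/
def SatTuple {σ : Type u} (L : Set (UWord σ)) (w : UWord σ) : Prop :=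
  (∀ p ∈ Cset L, ¬(w p.1 ≠ 0 ∧ w p.2 ≠ 0)) ∧
  (∀ a : σ, (a, w a) ∈ Nset L) ∧
  (∀ X ∈ Pset L, ∃ a ∈ X, w a ≠ 0) ∧
  (∀ p ∈ Kset L, w p.2 ≤ w p.1)

/-- Subsumption `Δ_{E'} ≼ Δ_E` of characterizing tuples, for `L' = L(E')` and `L = L(E)`:
`C_E ⊆ C_{E'}`, `N_{E'} ⊆ N_E`, `P_E ⊆ P_{E'}`, and `K_E ⊆ K_{E'}`. -/
def TupleLE {σ : Type u} (L' L : Set (UWord σ)) : Prop :=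
  Cset L ⊆ Cset L' ∧ Nset L' ⊆ Nset L ∧ Pset L ⊆ Pset L' ∧ Kset L ⊆ Kset L'

namespace S2Aux

open List

lemma uword_ext {σ : Type} {w₁ w₂ : UWord σ} (h : ∀ a, w₁ a = w₂ a) : w₁ = w₂ := funext h

lemma add_apply {σ : Type} (w₁ w₂ : UWord σ) (a : σ) : (w₁.add w₂) a = w₁ a + w₂ a := rfl

lemma zero_apply {σ : Type} (a : σ) : (UWord.zero : UWord σ) a = 0 := rfl

lemma listSum_apply {σ : Type} (l : List (UWord σ)) (a : σ) :
    listSum l a = (l.map (fun x => x a)).sum := by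
  induction l with
  | nil => rfl
  | cons x xs ih =>
    show (x.add (listSum xs)) a = _
    simp [add_apply, ih]

lemma listSum_nil {σ : Type} : listSum ([] : List (UWord σ)) = UWord.zero := rfl

lemma listSum_singleton {σ : Type} (x : UWord σ) : listSum [x] = x := by
  apply uword_ext; intro a
  simp [listSum_apply]

lemma listSum_append {σ : Type} (l₁ l₂ : List (UWord σ)) :
    listSum (l₁ ++ l₂) = (listSum l₁).add (listSum l₂) := by
  apply uword_ext; intro a
  simp [listSum_apply, add_apply]

lemma listSum_le {σ : Type} (l : List (UWord σ)) (a b : σ)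
    (h : ∀ x ∈ l, x b ≤ x a) : listSum l b ≤ listSum l a := by
  induction l with
  | nil => exact le_refl _
  | cons x xs ih =>
    show (x.add (listSum xs)) b ≤ (x.add (listSum xs)) a
    simp only [add_apply]
    exact Nat.add_le_add (h x (by simp)) (ih fun y hy => h y (by simp [hy]))

lemma listSum_eq_length {σ : Type} (l : List (UWord σ)) (a : σ)
    (h : ∀ x ∈ l, x a = 1) : listSum l a = l.length := by
  induction l with
  | nil => rfl
  | cons x xs ih =>
    show (x.add (listSum xs)) a = _
    simp only [add_apply, h x (by simp), length_cons, ih fun y hy => h y (by simp [hy])]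
    omega

lemma listSum_le_length {σ : Type} (l : List (UWord σ)) (a : σ)
    (h : ∀ x ∈ l, x a ≤ 1) : listSum l a ≤ l.length := by
  induction l with
  | nil => exact le_refl _
  | cons x xs ih =>
    show (x.add (listSum xs)) a ≤ _
    simp only [add_apply, length_cons]
    have := h x (by simp)
    have := ih fun y hy => h y (by simp [hy])
    omega

lemma listSum_zero {σ : Type} (l : List (UWord σ)) (a : σ)
    (h : ∀ x ∈ l, x a = 0) : listSum l a = 0 := by
  induction l with
  | nil => rfl
  | cons x xs ih =>
    show (x.add (listSum xs)) a = 0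
    simp only [add_apply, h x (by simp), ih fun y hy => h y (by simp [hy])]

/-- Restriction of a word to a list of symbols. -/
def restr {σ : Type} [DecidableEq σ] (w : UWord σ) (S : List σ) : UWord σ :=
  fun a => if a ∈ S then w a else 0

def asyms {σ : Type} (A : Atom σ) : List σ := A.map Prod.fst

def csyms {σ : Type} (D : Clause σ) : List σ := D.flatMap fun q => q.1.map Prod.fst

lemma symbols_eq {σ : Type} (E : DIME σ) :
    E.symbols = E.clauses.flatMap (fun p => csyms p.1) := rfl

lemma nodup_of_flatMap {α β : Type*} (g : α → List β) {l : List α}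
    (h : (l.flatMap g).Nodup) {p : α} (hp : p ∈ l) : (g p).Nodup := by
  induction l with
  | nil => cases hp
  | cons q l ih =>
    rw [flatMap_cons, nodup_append] at h
    rcases List.mem_cons.1 hp with rfl | hp
    · exact h.1
    · exact ih h.2.1 hp

lemma disjoint_of_flatMap {α β : Type*} (g : α → List β) {q : α} {l : List α}
    (h : ((q :: l).flatMap g).Nodup) : (g q).Disjoint (l.flatMap g) := by
  rw [flatMap_cons, nodup_append] at h
  exact fun a ha hb => h.2.2 a ha a hb rfl

lemma nodup_tail_flatMap {α β : Type*} (g : α → List β) {q : α} {l : List α}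
    (h : ((q :: l).flatMap g).Nodup) : (l.flatMap g).Nodup := by
  rw [flatMap_cons, nodup_append] at h
  exact h.2.1

lemma flatMap_unique {α β : Type*} (g : α → List β) {l : List α}
    (h : (l.flatMap g).Nodup) {p q : α} (hp : p ∈ l) (hq : q ∈ l) {x : β}
    (hxp : x ∈ g p) (hxq : x ∈ g q) : p = q := by
  induction l with
  | nil => cases hp
  | cons r l ih =>
    have hd := disjoint_of_flatMap g h
    have ht := nodup_tail_flatMap g h
    rcases List.mem_cons.1 hp with hp1 | hp1
    · rcases List.mem_cons.1 hq with hq1 | hq1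
      · exact hp1.trans hq1.symm
      · subst hp1
        exact (hd hxp (mem_flatMap.2 ⟨q, hq1, hxq⟩)).elim
    · rcases List.mem_cons.1 hq with hq1 | hq1
      · subst hq1
        exact (hd hxq (mem_flatMap.2 ⟨p, hp1, hxp⟩)).elim
      · exact ih ht hp1 hq1

end S2Aux
namespace S2Aux

open List

set_option linter.unusedSectionVars false
set_option linter.unusedVariables false

variable {σ : Type} [DecidableEq σ]

lemma single_self (a : σ) : UWord.single a a = 1 := by simp [UWord.single]

lemma single_other {a b : σ} (h : b ≠ a) : UWord.single a b = 0 := by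
  simp [UWord.single, h]

lemma atomEntry_true {c : σ} {x : UWord σ} (hx : x ∈ atomEntryLang (c, true)) :
    x = UWord.single c := by simpa [atomEntryLang] using hx

lemma atomEntry_false {c : σ} {x : UWord σ} (hx : x ∈ atomEntryLang (c, false)) :
    x = UWord.single c ∨ x = UWord.zero := by simpa [atomEntryLang] using hx

lemma atomEntry_mem_single (c : σ) (fl : Bool) : UWord.single c ∈ atomEntryLang (c, fl) := by
  cases fl <;> simp [atomEntryLang]

lemma atomEntry_mem_zero (c : σ) : UWord.zero ∈ atomEntryLang (c, false) := by
  simp [atomEntryLang]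

lemma atomEntry_zero {p : σ × Bool} {x : UWord σ} (hx : x ∈ atomEntryLang p) {a : σ}
    (ha : a ≠ p.1) : x a = 0 := by
  obtain ⟨c, fl⟩ := p
  cases fl
  · rcases atomEntry_false hx with rfl | rfl
    · exact single_other ha
    · rfl
  · rw [atomEntry_true hx]; exact single_other ha

lemma atomEntry_le_one {p : σ × Bool} {x : UWord σ} (hx : x ∈ atomEntryLang p) (a : σ) :
    x a ≤ 1 := by
  by_cases h : a = p.1
  · subst h
    obtain ⟨c, fl⟩ := p
    cases fl
    · rcases atomEntry_false hx with rfl | rfl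
      · rw [single_self]
      · exact Nat.zero_le 1
    · rw [atomEntry_true hx, single_self]
  · rw [atomEntry_zero hx h]; omega

lemma atom_supp {A : Atom σ} {x : UWord σ} (hx : x ∈ Atom.lang A) {a : σ}
    (ha : a ∉ asyms A) : x a = 0 := by
  induction A generalizing x with
  | nil => obtain rfl : x = UWord.zero := hx; rfl
  | cons e A ih =>
    obtain ⟨w₁, hw₁, w₂, hw₂, rfl⟩ := hx
    have hane : a ≠ e.1 := fun h => ha (by simp [asyms, h])
    have ha' : a ∉ asyms A := fun h => ha (by simp [asyms] at h ⊢; right; exact h)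
    rw [add_apply, atomEntry_zero hw₁ hane, ih hw₂ ha']

lemma iter_supp {L : Set (UWord σ)} {J : Iv} {x : UWord σ} (hx : x ∈ iterLang L J)
    {a : σ} (hL : ∀ y ∈ L, y a = 0) : x a = 0 := by
  rcases hx with ⟨l, hl, -, -, rfl⟩ | ⟨-, rfl⟩
  · exact listSum_zero l a fun y hy => hL y (hl y hy)
  · rfl

lemma clause_supp {D : Clause σ} {x : UWord σ} (hx : x ∈ Clause.lang D) {a : σ}
    (ha : a ∉ csyms D) : x a = 0 := by
  obtain ⟨q, hq, hx⟩ := hx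
  refine iter_supp hx fun y hy => atom_supp hy fun hmem => ha ?_
  exact mem_flatMap.2 ⟨q, hq, hmem⟩

lemma iterclause_supp {D : Clause σ} {I : Iv} {x : UWord σ}
    (hx : x ∈ iterLang (Clause.lang D) I) {a : σ} (ha : a ∉ csyms D) : x a = 0 :=
  iter_supp hx fun y hy => clause_supp hy ha

lemma conc_supp {cs : List (Clause σ × Iv)} {x : UWord σ}
    (hx : x ∈ listConcLang (fun p => iterLang (Clause.lang p.1) p.2) cs) {a : σ}
    (ha : a ∉ cs.flatMap fun p => csyms p.1) : x a = 0 := by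
  induction cs generalizing x with
  | nil => obtain rfl : x = UWord.zero := hx; rfl
  | cons q cs ih =>
    obtain ⟨w₁, hw₁, w₂, hw₂, rfl⟩ := hx
    rw [mem_flatMap] at ha
    push_neg at ha
    rw [add_apply, iterclause_supp hw₁ (ha q (by simp)),
      ih hw₂ (fun hmem => by
        obtain ⟨p, hp, hmem⟩ := mem_flatMap.1 hmem
        exact (ha p (by simp [hp])) hmem)]

lemma atom_count_one {A : Atom σ} (hnd : (asyms A).Nodup) {x : UWord σ}
    (hx : x ∈ Atom.lang A) {b : σ} (hb : (b, true) ∈ A) : x b = 1 := by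
  induction A generalizing x with
  | nil => cases hb
  | cons e A ih =>
    obtain ⟨w₁, hw₁, w₂, hw₂, rfl⟩ := hx
    have hnd' : (asyms A).Nodup := (List.nodup_cons.1 hnd).2
    have hhead : e.1 ∉ asyms A := (List.nodup_cons.1 hnd).1
    rcases List.mem_cons.1 hb with he | hb'
    · subst he
      have h2 : w₂ b = 0 := atom_supp hw₂ hhead
      rw [add_apply, atomEntry_true hw₁, single_self, h2]
    · have hbA : b ∈ asyms A := by
        simp only [asyms, List.mem_map]; exact ⟨(b, true), hb', rfl⟩
      have hne : b ≠ e.1 := fun h => hhead (h ▸ hbA)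
      rw [add_apply, atomEntry_zero hw₁ hne, ih hnd' hw₂ hb']

lemma atom_count_le {A : Atom σ} (hnd : (asyms A).Nodup) {x : UWord σ}
    (hx : x ∈ Atom.lang A) (b : σ) : x b ≤ 1 := by
  induction A generalizing x with
  | nil => obtain rfl : x = UWord.zero := hx; exact Nat.zero_le 1
  | cons e A ih =>
    obtain ⟨w₁, hw₁, w₂, hw₂, rfl⟩ := hx
    have hnd' : (asyms A).Nodup := (List.nodup_cons.1 hnd).2
    have hhead : e.1 ∉ asyms A := (List.nodup_cons.1 hnd).1
    by_cases hbe : b = e.1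
    · subst hbe
      rw [add_apply, atom_supp hw₂ hhead]
      simpa using atomEntry_le_one hw₁ e.1
    · rw [add_apply, atomEntry_zero hw₁ hbe]
      simpa using ih hnd' hw₂

lemma atom_mem_of_pred {A : Atom σ} (hnd : (asyms A).Nodup) {x : UWord σ}
    (h1 : ∀ b, (b, true) ∈ A → x b = 1) (h2 : ∀ b, (b, false) ∈ A → x b ≤ 1)
    (h0 : ∀ b, b ∉ asyms A → x b = 0) : x ∈ Atom.lang A := by
  induction A generalizing x with
  | nil =>
    have : x = UWord.zero := uword_ext fun a => h0 a (by simp [asyms])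
    exact this
  | cons e A ih =>
    obtain ⟨c, fl⟩ := e
    have hnd' : (asyms A).Nodup := (List.nodup_cons.1 hnd).2
    have hhead : c ∉ asyms A := (List.nodup_cons.1 hnd).1
    have hxc : x c ≤ 1 := by
      cases fl
      · exact h2 c (by simp)
      · rw [h1 c (by simp)]
    refine ⟨(if x c = 0 then UWord.zero else UWord.single c), ?_,
      (fun b => if b = c then 0 else x b), ?_, ?_⟩
    · cases fl
      · split
        · exact atomEntry_mem_zero c
        · exact atomEntry_mem_single c false
      · rw [if_neg (by rw [h1 c (by simp)]; omega)]
        exact atomEntry_mem_single c true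
    · apply ih hnd'
      · intro b hb
        have hne : b ≠ c := fun h => hhead (h ▸ (by simp only [asyms, List.mem_map]; exact ⟨(b, true), hb, rfl⟩ : b ∈ asyms A))
        show (if b = c then 0 else x b) = 1
        rw [if_neg hne]; exact h1 b (List.mem_cons_of_mem _ hb)
      · intro b hb
        have hne : b ≠ c := fun h => hhead (h ▸ (by simp only [asyms, List.mem_map]; exact ⟨(b, false), hb, rfl⟩ : b ∈ asyms A))
        show (if b = c then 0 else x b) ≤ 1
        rw [if_neg hne]; exact h2 b (List.mem_cons_of_mem _ hb)
      · intro b hb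
        show (if b = c then 0 else x b) = 0
        by_cases hbc : b = c
        · rw [if_pos hbc]
        · rw [if_neg hbc]
          exact h0 b (fun h => by
            rcases List.mem_cons.1 h with h | h
            · exact hbc h
            · exact hb h)
    · apply uword_ext
      intro a
      show x a = _ + _
      by_cases hac : a = c
      · subst hac
        by_cases h : x a = 0
        · simp [h, UWord.zero]
        · have h1' : x a = 1 := by omega
          simp [h, UWord.single, h1']
      · by_cases h : x c = 0
        · simp [h, hac, UWord.zero]
        · simp [h, hac, UWord.single]

end S2Aux
namespace S2Aux

open List

set_option linter.unusedSectionVars false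
set_option linter.unusedVariables false

variable {σ : Type} [DecidableEq σ]

lemma mem_asyms {A : Atom σ} {a : σ} : a ∈ asyms A ↔ ∃ fl, (a, fl) ∈ A := by
  simp only [asyms, List.mem_map]
  constructor
  · rintro ⟨⟨b, fl⟩, hp, rfl⟩; exact ⟨fl, hp⟩
  · rintro ⟨fl, h⟩; exact ⟨(a, fl), h, rfl⟩

lemma fst_mem_asyms {A : Atom σ} {p : σ × Bool} (h : p ∈ A) : p.1 ∈ asyms A :=
  List.mem_map_of_mem (f := Prod.fst) h

lemma asyms_unique {A : Atom σ} (hnd : (asyms A).Nodup) {p q : σ × Bool}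
    (hp : p ∈ A) (hq : q ∈ A) (h : p.1 = q.1) : p = q := by
  induction A with
  | nil => cases hp
  | cons e A ih =>
    have hhead : e.1 ∉ asyms A := (List.nodup_cons.1 hnd).1
    have hnd' : (asyms A).Nodup := (List.nodup_cons.1 hnd).2
    rcases List.mem_cons.1 hp with rfl | hp' <;> rcases List.mem_cons.1 hq with rfl | hq'
    · rfl
    · exact absurd (h ▸ fst_mem_asyms hq') hhead
    · exact absurd (h ▸ fst_mem_asyms hp') (fun hc => hhead hc)
    · exact ih hnd' hp' hq'

lemma not_both_flags {A : Atom σ} (hnd : (asyms A).Nodup) {a : σ}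
    (h1 : (a, true) ∈ A) (h2 : (a, false) ∈ A) : False := by
  have := asyms_unique hnd h1 h2 rfl
  simp at this

lemma sum_indicator (j m : ℕ) :
    ((List.range j).map (fun i => if i < m then 1 else 0)).sum = min j m := by
  induction j with
  | zero => simp
  | succ j ih =>
    rw [List.range_succ, List.map_append, List.sum_append, ih]
    by_cases h : j < m
    · simp [h]; omega
    · simp [h]; omega

lemma atom_build {A : Atom σ} (hnd : (asyms A).Nodup) (v : UWord σ) (j : ℕ)
    (h1 : ∀ a, (a, true) ∈ A → v a = j) (h2 : ∀ a, (a, false) ∈ A → v a ≤ j)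
    (h0 : ∀ a, a ∉ asyms A → v a = 0) :
    ∃ l : List (UWord σ), (∀ x ∈ l, x ∈ Atom.lang A) ∧ l.length = j ∧ listSum l = v := by
  classical
  set f : ℕ → UWord σ :=
    fun i a => if (a, true) ∈ A then 1 else if (a, false) ∈ A ∧ i < v a then 1 else 0 with hf
  refine ⟨(List.range j).map f, ?_, by simp, ?_⟩
  · intro x hx
    obtain ⟨i, -, rfl⟩ := List.mem_map.1 hx
    apply atom_mem_of_pred hnd
    · intro b hb; simp only [hf]; rw [if_pos hb]
    · intro b hb
      simp only [hf]
      split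
      · exact le_refl 1
      · split
        · exact le_refl 1
        · exact Nat.zero_le 1
    · intro b hb
      simp only [hf]
      rw [if_neg (fun h => hb (fst_mem_asyms h)), if_neg (fun h => hb (fst_mem_asyms h.1))]
  · apply uword_ext
    intro a
    rw [listSum_apply, List.map_map]
    by_cases ht : (a, true) ∈ A
    · have : ((fun x => x a) ∘ f) = fun _ => 1 := by
        funext i; simp only [Function.comp, hf]; rw [if_pos ht]
      rw [this, h1 a ht]
      simp [List.map_const]
    · by_cases hq : (a, false) ∈ A
      · have : ((fun x => x a) ∘ f) = fun i => if i < v a then 1 else 0 := by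
          funext i
          simp only [Function.comp, hf]
          rw [if_neg ht]
          by_cases h : i < v a
          · rw [if_pos ⟨hq, h⟩, if_pos h]
          · rw [if_neg (fun hc => h hc.2), if_neg h]
        rw [this, sum_indicator, min_eq_right (h2 a hq)]
      · have hnm : a ∉ asyms A := fun hc => by
          rcases mem_asyms.1 hc with ⟨fl, hfl⟩
          cases fl
          · exact hq hfl
          · exact ht hfl
        have : ((fun x => x a) ∘ f) = fun _ => 0 := by
          funext i; simp only [Function.comp, hf]
          rw [if_neg ht, if_neg (fun hc => hq hc.1)]
        rw [this, h0 a hnm]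
        simp [List.map_const]

lemma mem_iterLang_list {L : Set (UWord σ)} {J : Iv} {l : List (UWord σ)}
    (h : ∀ y ∈ l, y ∈ L) (h1 : J.lo ≤ l.length) (h2 : (l.length : ℕ∞) ≤ J.hi) :
    listSum l ∈ iterLang L J := Or.inl ⟨l, h, h1, h2, rfl⟩

lemma iter_one_qmark_dest {L : Set (UWord σ)} {I : Iv} (hI : I = Iv.one ∨ I = Iv.qmark)
    {x : UWord σ} (hx : x ∈ iterLang L I) : x = UWord.zero ∨ x ∈ L := by
  have hopt : I.opt = false := by rcases hI with rfl | rfl <;> rfl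
  have hhi : I.hi = 1 := by rcases hI with rfl | rfl <;> rfl
  rcases hx with ⟨l, hl, -, hlen, rfl⟩ | ⟨ho, rfl⟩
  · rw [hhi] at hlen
    have hle : l.length ≤ 1 := by exact_mod_cast hlen
    cases l with
    | nil => left; rfl
    | cons y l' =>
      cases l' with
      | nil => right; rw [listSum_singleton]; exact hl y (by simp)
      | cons z l'' => simp at hle
  · rw [hopt] at ho; cases ho

lemma mem_iter_one_qmark {L : Set (UWord σ)} {I : Iv} (hI : I = Iv.one ∨ I = Iv.qmark)
    {x : UWord σ} (hx : x ∈ L) : x ∈ iterLang L I := by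
  have h := mem_iterLang_list (L := L) (J := I) (l := [x]) (by simpa)
    (by rcases hI with rfl | rfl <;> simp [Iv.one, Iv.qmark])
    (by rcases hI with rfl | rfl <;> simp [Iv.one, Iv.qmark])
  rwa [listSum_singleton] at h

lemma zero_mem_iter {L : Set (UWord σ)} {J : Iv} (h : J.lo = 0) :
    UWord.zero ∈ iterLang L J :=
  Or.inl ⟨[], by simp, by simp [h], by simp, rfl⟩

lemma atom_main [Fintype σ] {A : Atom σ} {J : Iv} (hnd : (asyms A).Nodup) {v : UWord σ}
    (hsupp : ∀ a, a ∉ asyms A → v a = 0)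
    (hne : ∃ u ∈ iterLang (Atom.lang A) J, ∃ a₀, u a₀ = v a₀ ∧ v a₀ ≠ 0)
    (hk : ∀ a b, a ∈ asyms A → b ∈ asyms A →
      (a, b) ∈ Kset (iterLang (Atom.lang A) J) → v b ≤ v a)
    (hn : ∀ a, a ∈ asyms A → v a = 0 ∨ (a, v a) ∈ Nset (iterLang (Atom.lang A) J)) :
    v ∈ iterLang (Atom.lang A) J := by
  classical
  obtain ⟨u, hu, a₀, hua₀, hva₀⟩ := hne
  have ha₀ : a₀ ∈ asyms A := by
    by_contra hc; exact hva₀ (hsupp a₀ hc)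
  -- key Kset fact
  have K1 : ∀ a₁, (a₁, true) ∈ A → ∀ b, b ∈ asyms A →
      (a₁, b) ∈ Kset (iterLang (Atom.lang A) J) := by
    intro a₁ h₁ b hb
    intro x hx
    rcases hx with ⟨l, hl, -, -, rfl⟩ | ⟨-, rfl⟩
    · show listSum l b ≤ listSum l a₁
      calc listSum l b ≤ l.length :=
            listSum_le_length l b fun y hy => atom_count_le hnd (hl y hy) b
        _ = listSum l a₁ :=
            (listSum_eq_length l a₁ fun y hy => atom_count_one hnd (hl y hy) h₁).symm
    · exact le_refl 0
  by_cases hex : ∃ a₁, (a₁, true) ∈ A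
  · obtain ⟨a₁, h₁⟩ := hex
    have ha₁ : a₁ ∈ asyms A := fst_mem_asyms h₁
    have hmax : ∀ b, b ∈ asyms A → v b ≤ v a₁ := fun b hb =>
      hk a₁ b ha₁ hb (K1 a₁ h₁ b hb)
    have hj0 : v a₁ ≠ 0 := by
      have := hmax a₀ ha₀; omega
    rcases hn a₁ ha₁ with h | h
    · exact absurd h hj0
    obtain ⟨x, hx, hxa⟩ := h
    rcases hx with ⟨l, hl, hlo, hhi, rfl⟩ | ⟨-, rfl⟩
    · have hlen : listSum l a₁ = l.length :=
        listSum_eq_length l a₁ fun y hy => atom_count_one hnd (hl y hy) h₁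
      have hjl : l.length = v a₁ := by rw [← hlen, hxa]
      obtain ⟨l', hl', hlen', hsum'⟩ := atom_build hnd v (v a₁)
        (fun a ha => le_antisymm (hmax a (fst_mem_asyms ha))
          (hk a a₁ (fst_mem_asyms ha) ha₁ (K1 a ha a₁ ha₁)))
        (fun a ha => hmax a (fst_mem_asyms ha))
        hsupp
      rw [← hsum']
      exact mem_iterLang_list hl' (by omega) (by rw [hlen', ← hjl]; exact hhi)
    · exact absurd hxa.symm (by simpa [zero_apply] using hj0)
  · push_neg at hex
    set M := Finset.univ.sup v with hM
    have hMle : ∀ a : σ, v a ≤ M := fun a => Finset.le_sup (Finset.mem_univ a)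
    have hcast : ∀ a : σ, (v a : ℕ∞) ≤ J.hi := by
      intro a
      by_cases hva : v a = 0
      · rw [hva]; exact zero_le
      · have haA : a ∈ asyms A := by by_contra hc; exact hva (hsupp a hc)
        rcases hn a haA with h | h
        · exact absurd h hva
        obtain ⟨x, hx, hxa⟩ := h
        rcases hx with ⟨l, hl, -, hhi, rfl⟩ | ⟨-, rfl⟩
        · have : listSum l a ≤ l.length :=
            listSum_le_length l a fun y hy => atom_count_le hnd (hl y hy) a
          have hxa' : listSum l a = v a := hxa
          calc (v a : ℕ∞) ≤ (l.length : ℕ∞) := by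
                rw [← hxa']; exact_mod_cast this
            _ ≤ J.hi := hhi
        · exact absurd hxa.symm (by simpa [zero_apply] using hva)
    have hlohi : (J.lo : ℕ∞) ≤ J.hi := by
      rcases hu with ⟨l, -, hlo, hhi, rfl⟩ | ⟨-, rfl⟩
      · calc (J.lo : ℕ∞) ≤ (l.length : ℕ∞) := by exact_mod_cast hlo
          _ ≤ J.hi := hhi
      · exact absurd hua₀.symm (by simpa [zero_apply] using hva₀)
    have hMhi : (M : ℕ∞) ≤ J.hi := by
      obtain ⟨a, -, ha⟩ := Finset.exists_mem_eq_sup Finset.univ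
        ⟨a₀, Finset.mem_univ a₀⟩ v
      rw [hM, ha]
      exact hcast a
    obtain ⟨l', hl', hlen', hsum'⟩ := atom_build hnd v (max J.lo M)
      (fun a ha => absurd (hex a) (by simp [ha]))
      (fun a ha => le_trans (hMle a) (le_max_right _ _))
      hsupp
    rw [← hsum']
    refine mem_iterLang_list hl' (by omega) ?_
    rw [hlen']
    rcases le_total J.lo M with h | h
    · rw [max_eq_right h]; exact hMhi
    · rw [max_eq_left h]; exact hlohi

end S2Aux
namespace S2Aux

open List

set_option linter.unusedSectionVars false
set_option linter.unusedVariables false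
set_option maxHeartbeats 1000000

variable {σ : Type} [DecidableEq σ]

lemma mem_csyms {D : Clause σ} {a : σ} : a ∈ csyms D ↔ ∃ q ∈ D, a ∈ asyms q.1 := by
  simp only [csyms, mem_flatMap]
  rfl

lemma asyms_mem_csyms {D : Clause σ} {q : Atom σ × Iv} (hq : q ∈ D) {a : σ}
    (ha : a ∈ asyms q.1) : a ∈ csyms D := mem_csyms.2 ⟨q, hq, ha⟩

lemma clause_unique {D : Clause σ} (hnd : (csyms D).Nodup) {q q' : Atom σ × Iv}
    (hq : q ∈ D) (hq' : q' ∈ D) {a : σ} (ha : a ∈ asyms q.1) (ha' : a ∈ asyms q'.1) :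
    q = q' :=
  flatMap_unique (fun q : Atom σ × Iv => q.1.map Prod.fst)
    (show (D.flatMap fun q => q.1.map Prod.fst).Nodup from hnd) hq hq' ha ha'

lemma atom_nodup_of_clause {D : Clause σ} (hnd : (csyms D).Nodup) {q : Atom σ × Iv}
    (hq : q ∈ D) : (asyms q.1).Nodup :=
  nodup_of_flatMap (fun q : Atom σ × Iv => q.1.map Prod.fst)
    (show (D.flatMap fun q => q.1.map Prod.fst).Nodup from hnd) hq

lemma clause_build [Fintype σ] {D : Clause σ} (hs : Clause.Simple D)
    (hnd : (csyms D).Nodup) (v : UWord σ) (hsupp : ∀ a, a ∉ csyms D → v a = 0)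
    (hkk : ∀ q ∈ D, ∀ a b, (a, true) ∈ q.1 → b ∈ asyms q.1 → v b ≤ v a) :
    ∃ l : List (UWord σ), (∀ x ∈ l, x ∈ Clause.lang D) ∧ listSum l = v := by
  classical
  induction D generalizing v with
  | nil =>
    refine ⟨[], by simp, ?_⟩
    apply uword_ext; intro a
    exact (hsupp a (by simp [csyms])).symm
  | cons q D ih =>
    have hcs : csyms (q :: D) = asyms q.1 ++ csyms D := rfl
    rw [hcs, nodup_append] at hnd
    obtain ⟨hndA, hndD, hdisj⟩ := hnd
    set vA : UWord σ := restr v (asyms q.1) with hvA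
    set v' : UWord σ := fun a => if a ∈ asyms q.1 then 0 else v a with hv'
    -- tail
    obtain ⟨l', hl', hsum'⟩ := ih (fun p hp => hs p (List.mem_cons_of_mem _ hp)) hndD v'
      (fun a ha => by
        simp only [hv']
        by_cases h : a ∈ asyms q.1
        · rw [if_pos h]
        · rw [if_neg h]
          exact hsupp a (fun hc => by
            rcases mem_csyms.1 hc with ⟨p, hp, hap⟩
            rcases List.mem_cons.1 hp with rfl | hp'
            · exact h hap
            · exact ha (asyms_mem_csyms hp' hap)))
      (fun p hp a b hat hb => by
        have haD : a ∈ asyms p.1 := fst_mem_asyms hat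
        have hanq : a ∉ asyms q.1 := fun hc => hdisj a hc a (mem_flatMap.2 ⟨p, hp, haD⟩) rfl
        have hbnq : b ∉ asyms q.1 := fun hc => hdisj b hc b (mem_flatMap.2 ⟨p, hp, hb⟩) rfl
        simp only [hv', if_neg hanq, if_neg hbnq]
        exact hkk p (List.mem_cons_of_mem _ hp) a b hat hb)
    -- head
    have hres : ∀ a, a ∈ asyms q.1 → vA a = v a := fun a ha => by
      simp only [hvA, restr, if_pos ha]
    have hres0 : ∀ a, a ∉ asyms q.1 → vA a = 0 := fun a ha => by
      simp only [hvA, restr, if_neg ha]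
    set j : ℕ := Finset.univ.sup vA with hj
    have hle : ∀ a, vA a ≤ j := fun a => Finset.le_sup (Finset.mem_univ a)
    obtain ⟨lA, hlA, hlenA, hsumA⟩ := atom_build hndA vA j
      (fun a ha => by
        refine le_antisymm (hle a) (Finset.sup_le fun b _ => ?_)
        by_cases hb : b ∈ asyms q.1
        · rw [hres b hb, hres a (fst_mem_asyms ha)]
          exact hkk q List.mem_cons_self a b ha hb
        · rw [hres0 b hb]; exact Nat.zero_le _)
      (fun a ha => hle a)
      hres0
    refine ⟨lA ++ l', ?_, ?_⟩
    · intro x hx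
      rcases List.mem_append.1 hx with hx | hx
      · exact ⟨q, List.mem_cons_self,
          mem_iter_one_qmark (hs q List.mem_cons_self) (hlA x hx)⟩
      · obtain ⟨p, hp, hxp⟩ := hl' x hx
        exact ⟨p, List.mem_cons_of_mem _ hp, hxp⟩
    · rw [listSum_append, hsumA, hsum']
      apply uword_ext; intro a
      rw [add_apply]
      by_cases h : a ∈ asyms q.1
      · rw [hres a h]; simp only [hv', if_pos h]; omega
      · rw [hres0 a h]; simp only [hv', if_neg h]; omega

lemma clause_main [Fintype σ] {D : Clause σ} {I : Iv}
    (hwf : (Clause.Simple D ∧ (I = Iv.iplus ∨ I = Iv.istar)) ∨ (I = Iv.one ∨ I = Iv.qmark))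
    (hnd : (csyms D).Nodup) {v : UWord σ}
    (hsupp : ∀ a, a ∉ csyms D → v a = 0)
    (hc : ∀ a b, a ∈ csyms D → b ∈ csyms D →
      (a, b) ∈ Cset (iterLang (Clause.lang D) I) → ¬(v a ≠ 0 ∧ v b ≠ 0))
    (hn : ∀ a, a ∈ csyms D → (a, v a) ∈ Nset (iterLang (Clause.lang D) I))
    (hp : ∀ X ∈ Pset (iterLang (Clause.lang D) I), ∃ a ∈ X, v a ≠ 0)
    (hk : ∀ a b, a ∈ csyms D → b ∈ csyms D →
      (a, b) ∈ Kset (iterLang (Clause.lang D) I) → v b ≤ v a) :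
    v ∈ iterLang (Clause.lang D) I := by
  classical
  set CL := iterLang (Clause.lang D) I with hCL
  by_cases hv0 : ∀ a, v a = 0
  · have hv : v = UWord.zero := funext hv0
    by_cases h0 : UWord.zero ∈ CL
    · rw [hv]; exact h0
    · exfalso
      have huniv : Set.univ ∈ Pset CL := by
        intro x hx
        by_contra hcon
        push_neg at hcon
        have : x = UWord.zero := uword_ext fun a => hcon a (Set.mem_univ a)
        exact h0 (this ▸ hx)
      obtain ⟨a, -, ha⟩ := hp Set.univ huniv
      exact ha (hv0 a)
  · push_neg at hv0
    obtain ⟨a₀, hva₀⟩ := hv0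
    have ha₀ : a₀ ∈ csyms D := by by_contra hcon; exact hva₀ (hsupp a₀ hcon)
    rcases hwf with ⟨hs, hI⟩ | hI
    · -- simple clause with + or *
      have hkk : ∀ q ∈ D, ∀ a b, (a, true) ∈ q.1 → b ∈ asyms q.1 → v b ≤ v a := by
        intro q hq a b hat hb
        have haq : a ∈ asyms q.1 := fst_mem_asyms hat
        refine hk a b (asyms_mem_csyms hq haq) (asyms_mem_csyms hq hb) ?_
        intro x hx
        show x b ≤ x a
        rcases hx with ⟨l, hl, -, -, rfl⟩ | ⟨-, rfl⟩
        · refine listSum_le l a b ?_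
          intro y hy
          obtain ⟨q', hq', hyq'⟩ := hl y hy
          by_cases haq' : a ∈ asyms q'.1
          · have : q = q' := clause_unique hnd hq hq' haq haq'
            subst this
            rcases iter_one_qmark_dest (hs q hq) hyq' with rfl | hy'
            · exact le_refl 0
            · calc y b ≤ 1 := atom_count_le (atom_nodup_of_clause hnd hq) hy' b
                _ = y a := (atom_count_one (atom_nodup_of_clause hnd hq) hy' hat).symm
          · have hya : y a = 0 := iter_supp hyq' fun z hz => atom_supp hz haq'
            have hyb : y b = 0 := by
              refine iter_supp hyq' fun z hz => atom_supp hz ?_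
              intro hbq'
              exact haq' ((clause_unique hnd hq hq' hb hbq') ▸ haq)
            rw [hya, hyb]
        · exact le_refl 0
      obtain ⟨l, hl, hsum⟩ := clause_build hs hnd v hsupp hkk
      rw [← hsum]
      refine mem_iterLang_list hl ?_ ?_
      · rcases hI with rfl | rfl
        · show 1 ≤ l.length
          cases l with
          | nil =>
            exfalso
            apply hva₀
            rw [← hsum]; rfl
          | cons y l' => simp
        · exact Nat.zero_le _
      · rcases hI with rfl | rfl <;> exact le_top
    · -- clause with 1 or ?
      obtain ⟨u, hu, hua₀⟩ := hn a₀ ha₀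
      have hua₀' : u a₀ = v a₀ := hua₀
      rcases iter_one_qmark_dest hI hu with rfl | huD
      · exact absurd (hua₀'.symm) (by simpa [zero_apply] using hva₀)
      obtain ⟨q, hq, huq⟩ := huD
      have ha₀q : a₀ ∈ asyms q.1 := by
        by_contra hcon
        exact hva₀ (hua₀' ▸ iter_supp huq fun z hz => atom_supp hz hcon)
      have hvsupp : ∀ b, b ∉ asyms q.1 → v b = 0 := by
        intro b hb
        by_cases hbD : b ∈ csyms D
        · have hCab : (a₀, b) ∈ Cset CL := by
            intro x hx
            show ¬(x a₀ ≠ 0 ∧ x b ≠ 0)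
            rintro ⟨hxa, hxb⟩
            rcases iter_one_qmark_dest hI hx with rfl | hxD
            · exact hxa rfl
            obtain ⟨q', hq', hxq'⟩ := hxD
            have ha₀q' : a₀ ∈ asyms q'.1 := by
              by_contra hcon
              exact hxa (iter_supp hxq' fun z hz => atom_supp hz hcon)
            have : q = q' := clause_unique hnd hq hq' ha₀q ha₀q'
            subst this
            exact hxb (iter_supp hxq' fun z hz => atom_supp hz hb)
          have := hc a₀ b ha₀ hbD hCab
          by_contra hvb
          exact this ⟨hva₀, hvb⟩
        · exact hsupp b hbD
      have hndA : (asyms q.1).Nodup := atom_nodup_of_clause hnd hq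
      have hmem : v ∈ iterLang (Atom.lang q.1) q.2 := by
        apply atom_main hndA hvsupp ⟨u, huq, a₀, hua₀', hva₀⟩
        · intro a b ha hb hK
          refine hk a b (asyms_mem_csyms hq ha) (asyms_mem_csyms hq hb) ?_
          intro x hx
          show x b ≤ x a
          rcases iter_one_qmark_dest hI hx with rfl | hxD
          · exact le_refl 0
          obtain ⟨q', hq', hxq'⟩ := hxD
          by_cases haq' : a ∈ asyms q'.1
          · have : q = q' := clause_unique hnd hq hq' ha haq'
            subst this
            exact hK x hxq'
          · have hxa : x a = 0 := iter_supp hxq' fun z hz => atom_supp hz haq'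
            have hxb : x b = 0 := by
              refine iter_supp hxq' fun z hz => atom_supp hz ?_
              intro hbq'
              exact haq' ((clause_unique hnd hq hq' hb hbq') ▸ ha)
            rw [hxa, hxb]
        · intro a ha
          by_cases hva : v a = 0
          · exact Or.inl hva
          right
          obtain ⟨x, hx, hxa⟩ := hn a (asyms_mem_csyms hq ha)
          have hxa' : x a = v a := hxa
          rcases iter_one_qmark_dest hI hx with rfl | hxD
          · exact absurd hxa'.symm (by simpa [zero_apply] using hva)
          obtain ⟨q', hq', hxq'⟩ := hxD
          have haq' : a ∈ asyms q'.1 := by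
            by_contra hcon
            exact hva (hxa' ▸ iter_supp hxq' fun z hz => atom_supp hz hcon)
          have : q = q' := clause_unique hnd hq hq' ha haq'
          subst this
          exact ⟨x, hxq', hxa'⟩
      exact mem_iter_one_qmark hI ⟨q, hq, hmem⟩

end S2Aux
namespace S2Aux

open List

set_option linter.unusedSectionVars false
set_option linter.unusedVariables false
set_option maxHeartbeats 1000000

variable {σ : Type} [DecidableEq σ]

lemma restr_mem {w : UWord σ} {S : List σ} {a : σ} (h : a ∈ S) : restr w S a = w a := by
  simp [restr, h]

lemma restr_not_mem {w : UWord σ} {S : List σ} {a : σ} (h : a ∉ S) : restr w S a = 0 := by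
  simp [restr, h]

lemma decomp_mem {cs : List (Clause σ × Iv)}
    (hnd : (cs.flatMap fun p => csyms p.1).Nodup)
    {u : UWord σ} (hu : u ∈ listConcLang (fun p => iterLang (Clause.lang p.1) p.2) cs)
    {p : Clause σ × Iv} (hp : p ∈ cs) :
    restr u (csyms p.1) ∈ iterLang (Clause.lang p.1) p.2 := by
  induction cs generalizing u with
  | nil => cases hp
  | cons q cs ih =>
    obtain ⟨w₁, hw₁, w₂, hw₂, rfl⟩ := hu
    have hdisj := disjoint_of_flatMap (fun p : Clause σ × Iv => csyms p.1) hnd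
    have hndt := nodup_tail_flatMap (fun p : Clause σ × Iv => csyms p.1) hnd
    rcases List.mem_cons.1 hp with rfl | hp'
    · have heq : restr (w₁.add w₂) (csyms p.1) = w₁ := by
        apply uword_ext; intro a
        by_cases h : a ∈ csyms p.1
        · rw [restr_mem h, add_apply, conc_supp hw₂ (fun hc => hdisj h hc)]
          omega
        · rw [restr_not_mem h, iterclause_supp hw₁ h]
      rw [heq]; exact hw₁
    · have heq : restr (w₁.add w₂) (csyms p.1) = restr w₂ (csyms p.1) := by
        apply uword_ext; intro a
        by_cases h : a ∈ csyms p.1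
        · rw [restr_mem h, restr_mem h, add_apply,
            iterclause_supp hw₁ (fun hc => hdisj hc (mem_flatMap.2 ⟨p, hp', h⟩))]
          omega
        · rw [restr_not_mem h, restr_not_mem h]
      rw [heq]; exact ih hndt hw₂ hp'

lemma comp_mem {cs : List (Clause σ × Iv)}
    (hnd : (cs.flatMap fun p => csyms p.1).Nodup)
    {u : UWord σ} (hsupp : ∀ a, a ∉ cs.flatMap (fun p => csyms p.1) → u a = 0)
    (h : ∀ p ∈ cs, restr u (csyms p.1) ∈ iterLang (Clause.lang p.1) p.2) :
    u ∈ listConcLang (fun p => iterLang (Clause.lang p.1) p.2) cs := by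
  induction cs generalizing u with
  | nil => exact (uword_ext fun a => hsupp a (by simp) : u = UWord.zero)
  | cons q cs ih =>
    have hdisj := disjoint_of_flatMap (fun p : Clause σ × Iv => csyms p.1) hnd
    have hndt := nodup_tail_flatMap (fun p : Clause σ × Iv => csyms p.1) hnd
    refine ⟨restr u (csyms q.1), h q List.mem_cons_self,
      (fun a => if a ∈ csyms q.1 then 0 else u a), ?_, ?_⟩
    · apply ih hndt
      · intro a ha
        by_cases hq : a ∈ csyms q.1
        · simp [hq]
        · simp only [if_neg hq]
          refine hsupp a (fun hc => ?_)
          rcases mem_flatMap.1 hc with ⟨p, hp, hap⟩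
          rcases List.mem_cons.1 hp with rfl | hp'
          · exact hq hap
          · exact ha (mem_flatMap.2 ⟨p, hp', hap⟩)
      · intro p hp
        have heq : restr (fun a => if a ∈ csyms q.1 then 0 else u a) (csyms p.1) =
            restr u (csyms p.1) := by
          apply uword_ext; intro a
          by_cases hap : a ∈ csyms p.1
          · have haq : a ∉ csyms q.1 := fun hc =>
              hdisj hc (mem_flatMap.2 ⟨p, hp, hap⟩)
            simp only [restr, if_pos hap]
            simp [haq]
          · simp only [restr, if_neg hap]
        rw [heq]
        exact h p (List.mem_cons_of_mem _ hp)
    · apply uword_ext; intro a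
      show u a = _ + _
      by_cases hq : a ∈ csyms q.1
      · rw [restr_mem hq]; simp [hq]
      · rw [restr_not_mem hq]; simp [hq]

end S2Aux

/-- For every unordered word `w` and every DIME `E`,
`w ∈ L(E)` if and only if `w ⊨ Δ_E`. -/
theorem statement2 {σ : Type} [DecidableEq σ] [Fintype σ]
    (E : DIME σ) (hE : E.WF) (w : UWord σ) :
    w ∈ DIME.lang E ↔ SatTuple (DIME.lang E) w := by
  classical
  open S2Aux in
  constructor
  · intro hw
    exact ⟨fun p hp => hp w hw, fun a => ⟨w, hw, rfl⟩, fun X hX => hX w hw,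
      fun p hp => hp w hw⟩
  · rintro ⟨hC, hN, hP, hK⟩
    obtain ⟨hwfc, hnd⟩ := hE
    rw [S2Aux.symbols_eq] at hnd
    have hsupp : ∀ a, a ∉ E.clauses.flatMap (fun p => S2Aux.csyms p.1) → w a = 0 := by
      intro a ha
      obtain ⟨u, hu, hua⟩ := hN a
      have h' : u a = w a := hua
      rw [← h']
      exact S2Aux.conc_supp hu ha
    apply S2Aux.comp_mem hnd hsupp
    intro p hp
    have hndp : (S2Aux.csyms p.1).Nodup :=
      S2Aux.nodup_of_flatMap (fun p : Clause σ × Iv => S2Aux.csyms p.1) hnd hp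
    apply S2Aux.clause_main (hwfc p hp) hndp
    · intro a ha
      exact S2Aux.restr_not_mem ha
    · intro a b ha hb hCab
      have hmem : (a, b) ∈ Cset (DIME.lang E) := by
        intro x hx
        have h2 := hCab (S2Aux.restr x (S2Aux.csyms p.1)) (S2Aux.decomp_mem hnd hx hp)
        show ¬(x a ≠ 0 ∧ x b ≠ 0)
        rwa [show (S2Aux.restr x (S2Aux.csyms p.1)) (a, b).1 = x a from S2Aux.restr_mem ha,
          show (S2Aux.restr x (S2Aux.csyms p.1)) (a, b).2 = x b from S2Aux.restr_mem hb] at h2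
      have h3 := hC (a, b) hmem
      rw [S2Aux.restr_mem ha, S2Aux.restr_mem hb]
      exact h3
    · intro a ha
      obtain ⟨u, hu, hua⟩ := hN a
      refine ⟨S2Aux.restr u (S2Aux.csyms p.1), S2Aux.decomp_mem hnd hu hp, ?_⟩
      show S2Aux.restr u (S2Aux.csyms p.1) a = S2Aux.restr w (S2Aux.csyms p.1) a
      rw [S2Aux.restr_mem ha, S2Aux.restr_mem ha]
      exact hua
    · intro X hX
      have hX' : (X ∩ {a | a ∈ S2Aux.csyms p.1}) ∈ Pset (DIME.lang E) := by
        intro x hx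
        obtain ⟨a, haX, hax⟩ := hX (S2Aux.restr x (S2Aux.csyms p.1))
          (S2Aux.decomp_mem hnd hx hp)
        have hamem : a ∈ S2Aux.csyms p.1 := by
          by_contra hc
          exact hax (S2Aux.restr_not_mem hc)
        refine ⟨a, ⟨haX, hamem⟩, ?_⟩
        rwa [S2Aux.restr_mem hamem] at hax
      obtain ⟨a, ⟨haX, haS⟩, haw⟩ := hP _ hX'
      refine ⟨a, haX, ?_⟩
      rwa [S2Aux.restr_mem haS]
    · intro a b ha hb hKab
      have hmem : (a, b) ∈ Kset (DIME.lang E) := by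
        intro x hx
        have h2 := hKab (S2Aux.restr x (S2Aux.csyms p.1)) (S2Aux.decomp_mem hnd hx hp)
        show x b ≤ x a
        rwa [S2Aux.restr_mem ha, S2Aux.restr_mem hb] at h2
      have h3 := hK (a, b) hmem
      rw [S2Aux.restr_mem ha, S2Aux.restr_mem hb]
      exact h3
end

section
/- For any two DIMEs E and E': L(E') ⊆ L(E) if and only if Δ_{E'} ≼ Δ_E. -/
set_option autoImplicit false

universe u v w

namespace S4

variable {σ : Type} [DecidableEq σ]

lemma add_zero' (w : UWord σ) : UWord.add w UWord.zero = w := by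
  funext a; simp [UWord.add, UWord.zero]

lemma listSum_nil : listSum ([] : List (UWord σ)) = UWord.zero := rfl

lemma listSum_cons (x : UWord σ) (l : List (UWord σ)) :
    listSum (x :: l) = x.add (listSum l) := rfl

lemma listSum_append (l₁ l₂ : List (UWord σ)) :
    listSum (l₁ ++ l₂) = (listSum l₁).add (listSum l₂) := by
  induction l₁ with
  | nil =>
    funext a; simp [listSum_nil, UWord.add, UWord.zero]
  | cons x l ih =>
    simp only [List.cons_append, listSum_cons, ih]
    funext a; simp [UWord.add]; omega

/-- Symbols of an atom. -/
def atomSyms (A : Atom σ) : List σ := A.map Prod.fst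

/-- Symbols of a clause. -/
def clauseSyms (D : Clause σ) : List σ := D.flatMap fun q => atomSyms q.1

lemma clauseSyms_cons (p : Atom σ × Iv) (D : Clause σ) :
    clauseSyms (p :: D) = atomSyms p.1 ++ clauseSyms D := by
  simp [clauseSyms]

/-- Characterization of a word obtained by `n` iterations of an atom. -/
def AtomChar (A : Atom σ) (n : ℕ) (w : UWord σ) : Prop :=
  (∀ p ∈ A, (p.2 = true → w p.1 = n) ∧ (p.2 = false → w p.1 ≤ n)) ∧
  ∀ a, a ∉ atomSyms A → w a = 0

lemma flag_unique {A : Atom σ} (hnd : (atomSyms A).Nodup) {a : σ} {b b' : Bool}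
    (h : (a, b) ∈ A) (h' : (a, b') ∈ A) : b = b' := by
  have := List.inj_on_of_nodup_map (f := Prod.fst) hnd h h' rfl
  exact (Prod.mk.injEq _ _ _ _ ▸ this).2

lemma atomSyms_cons (p : σ × Bool) (A : Atom σ) :
    atomSyms (p :: A) = p.1 :: atomSyms A := rfl

lemma mem_atomLang {A : Atom σ} (hnd : (atomSyms A).Nodup) {w : UWord σ} :
    w ∈ Atom.lang A ↔
      (∀ p ∈ A, (p.2 = true → w p.1 = 1) ∧ (p.2 = false → w p.1 ≤ 1)) ∧
      ∀ a, a ∉ atomSyms A → w a = 0 := by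
  induction A generalizing w with
  | nil =>
    constructor
    · intro h
      have : w = UWord.zero := h
      subst this
      exact ⟨by simp, fun a _ => rfl⟩
    · rintro ⟨-, h⟩
      have : w = UWord.zero := funext fun a => h a (by simp [atomSyms])
      exact this
  | cons p A ih =>
    rw [atomSyms_cons, List.nodup_cons] at hnd
    obtain ⟨hp1, hndA⟩ := hnd
    constructor
    · rintro ⟨w₁, hw₁, w₂, hw₂, rfl⟩
      have hw₂' := (ih hndA).1 hw₂
      have hw₂p : w₂ p.1 = 0 := hw₂'.2 p.1 hp1
      have hw₁mem : w₁ = UWord.single p.1 ∨ (p.2 = false ∧ w₁ = UWord.zero) := by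
        by_cases hb : p.2 = true
        · left; simpa [atomEntryLang, hb] using hw₁
        · have : w₁ ∈ ({UWord.single p.1, UWord.zero} : Set (UWord σ)) := by
            simpa [atomEntryLang, hb] using hw₁
          rcases this with h | h
          · exact Or.inl h
          · exact Or.inr ⟨by simpa using hb, h⟩
      have hout : ∀ a, a ∉ atomSyms (p :: A) → (w₁.add w₂) a = 0 := by
        intro a ha
        have ha1 : a ≠ p.1 := by
          intro h; exact ha (by simp [atomSyms, h])
        have ha2 : a ∉ atomSyms A := by
          intro h; exact ha (by simp [atomSyms] at h ⊢; exact Or.inr h)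
        have h1 : w₁ a = 0 := by
          rcases hw₁mem with rfl | ⟨_, rfl⟩
          · simp [UWord.single, ha1]
          · rfl
        have h2 : w₂ a = 0 := hw₂'.2 a ha2
        simp [UWord.add, h1, h2]
      refine ⟨?_, hout⟩
      intro q hq
      rcases List.mem_cons.1 hq with rfl | hq'
      · constructor
        · intro hb
          rcases hw₁mem with rfl | ⟨hb', -⟩
          · simp [UWord.add, UWord.single, hw₂p]
          · rw [hb] at hb'; exact absurd hb' (by simp)
        · intro hb
          rcases hw₁mem with rfl | ⟨-, rfl⟩
          · simp [UWord.add, UWord.single, hw₂p]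
          · simp [UWord.add, UWord.zero, hw₂p]
      · have hqp : q.1 ≠ p.1 := by
          intro h
          exact hp1 (h ▸ (List.mem_map.2 ⟨q, hq', rfl⟩))
        have h1 : w₁ q.1 = 0 := by
          rcases hw₁mem with rfl | ⟨-, rfl⟩
          · simp [UWord.single, hqp]
          · rfl
        have := (hw₂'.1 q hq')
        constructor
        · intro hb; have := this.1 hb; simp [UWord.add, h1, this]
        · intro hb; have := this.2 hb; simp [UWord.add, h1]; omega
    · rintro ⟨hcnt, hout⟩
      -- build w₁, w₂
      set w₂ : UWord σ := fun a => if a = p.1 then 0 else w a with hw₂def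
      have hw₂mem : w₂ ∈ Atom.lang A := by
        refine (ih hndA).2 ⟨?_, ?_⟩
        · intro q hq
          have hqp : q.1 ≠ p.1 := by
            intro h
            exact hp1 (h ▸ (List.mem_map.2 ⟨q, hq, rfl⟩))
          have := hcnt q (List.mem_cons_of_mem _ hq)
          constructor
          · intro hb; simpa [hw₂def, hqp] using this.1 hb
          · intro hb; simpa [hw₂def, hqp] using this.2 hb
        · intro a ha
          by_cases h : a = p.1
          · simp [hw₂def, h]
          · have : a ∉ atomSyms (p :: A) := by
              rw [atomSyms_cons]; simp [h, ha]
            simpa [hw₂def, h] using hout a this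
      have hwp : w p.1 = 1 ∨ (p.2 = false ∧ w p.1 = 0) := by
        have := hcnt p (List.mem_cons_self)
        by_cases hb : p.2 = true
        · exact Or.inl (this.1 hb)
        · have hb' : p.2 = false := by simpa using hb
          have := this.2 hb'
          interval_cases h : w p.1
          · exact Or.inr ⟨hb', rfl⟩
          · exact Or.inl rfl
      rcases hwp with h1 | ⟨hb, h0⟩
      · refine ⟨UWord.single p.1, ?_, w₂, hw₂mem, ?_⟩
        · by_cases hb : p.2 = true <;> simp [atomEntryLang, hb]
        · funext a
          by_cases h : a = p.1
          · simp [UWord.add, UWord.single, hw₂def, h, h1]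
          · simp [UWord.add, UWord.single, hw₂def, h]
      · refine ⟨UWord.zero, ?_, w₂, hw₂mem, ?_⟩
        · simp [atomEntryLang, hb]
        · funext a
          by_cases h : a = p.1
          · simp [UWord.add, UWord.zero, hw₂def, h, h0]
          · simp [UWord.add, UWord.zero, hw₂def, h]

lemma sum_atomChar {A : Atom σ} (hnd : (atomSyms A).Nodup) :
    ∀ (l : List (UWord σ)), (∀ x ∈ l, x ∈ Atom.lang A) →
    AtomChar A l.length (listSum l) := by
  intro l
  induction l with
  | nil =>
    intro _
    exact ⟨fun p _ => ⟨fun _ => rfl, fun _ => Nat.le_refl _⟩, fun a _ => rfl⟩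
  | cons x l ih =>
    intro h
    have hx := (mem_atomLang hnd).1 (h x (List.mem_cons_self))
    have hl := ih (fun y hy => h y (List.mem_cons_of_mem _ hy))
    refine ⟨?_, ?_⟩
    · intro p hp
      have h1 := hx.1 p hp
      have h2 := hl.1 p hp
      constructor
      · intro hb
        have e1 := h1.1 hb; have e2 := h2.1 hb
        show x p.1 + listSum l p.1 = l.length + 1
        omega
      · intro hb
        have e1 := h1.2 hb; have e2 := h2.2 hb
        show x p.1 + listSum l p.1 ≤ l.length + 1
        omega
    · intro a ha
      have e1 := hx.2 a ha; have e2 := hl.2 a ha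
      show x a + listSum l a = 0
      omega

lemma atomChar_zero {A : Atom σ} {w : UWord σ} (h : AtomChar A 0 w) :
    w = UWord.zero := by
  funext a
  by_cases ha : a ∈ atomSyms A
  · obtain ⟨p, hp, hfst⟩ := List.mem_map.1 ha
    subst hfst
    have := h.1 p hp
    cases hb : p.2
    · have := this.2 hb; simpa [UWord.zero] using this
    · exact this.1 hb
  · exact h.2 a ha

lemma atomChar_build {A : Atom σ} (hnd : (atomSyms A).Nodup) :
    ∀ (n : ℕ) (w : UWord σ), AtomChar A n w →
    ∃ l : List (UWord σ), (∀ x ∈ l, x ∈ Atom.lang A) ∧ l.length = n ∧ w = listSum l := by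
  intro n
  induction n with
  | zero =>
    intro w h
    exact ⟨[], by simp, rfl, atomChar_zero h⟩
  | succ n ih =>
    intro w h
    set u : UWord σ := fun a =>
      if (a, true) ∈ A then 1 else if (a, false) ∈ A ∧ w a = n + 1 then 1 else 0 with hu
    set w' : UWord σ := fun a => w a - u a with hw'
    have humem : u ∈ Atom.lang A := by
      refine (mem_atomLang hnd).2 ⟨?_, ?_⟩
      · intro p hp
        constructor
        · intro hb
          have : (p.1, true) ∈ A := by rw [← hb]; exact hp
          simp [hu, this]
        · intro hb
          simp only [hu]
          split <;> [skip; split] <;> omega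
      · intro a ha
        have h1 : (a, true) ∉ A := fun hc => ha (List.mem_map.2 ⟨_, hc, rfl⟩)
        have h2 : (a, false) ∉ A := fun hc => ha (List.mem_map.2 ⟨_, hc, rfl⟩)
        simp [hu, h1, h2]
    have hule : ∀ a, u a ≤ w a := by
      intro a
      simp only [hu]
      split
      · rename_i hmem
        have := (h.1 (a, true) hmem).1 rfl
        simp at this ⊢; omega
      · split
        · rename_i hmem; omega
        · omega
    have hchar' : AtomChar A n w' := by
      constructor
      · intro p hp
        constructor
        · intro hb
          have hmem : (p.1, true) ∈ A := by rw [← hb]; exact hp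
          have := (h.1 p hp).1 hb
          simp [hw', hu, hmem, this]
        · intro hb
          have hmem : (p.1, false) ∈ A := by rw [← hb]; exact hp
          have hnot : (p.1, true) ∉ A := by
            intro hc
            exact Bool.noConfusion (flag_unique hnd hc hmem)
          have := (h.1 p hp).2 hb
          by_cases hcase : w p.1 = n + 1
          · simp [hw', hu, hmem, hnot, hcase]
          · simp [hw', hu, hnot, hcase]; omega
      · intro a ha
        have := h.2 a ha
        simp [hw', this]
    obtain ⟨l, hl, hlen, hsum⟩ := ih w' hchar'
    refine ⟨u :: l, ?_, by simp [hlen], ?_⟩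
    · intro x hx
      rcases List.mem_cons.1 hx with rfl | hx'
      · exact humem
      · exact hl x hx'
    · rw [listSum_cons, ← hsum]
      funext a
      have := hule a
      simp [UWord.add, hw']
      omega

lemma mem_iter_atom {A : Atom σ} (hnd : (atomSyms A).Nodup) {I : Iv} {w : UWord σ} :
    w ∈ iterLang (Atom.lang A) I ↔ ∃ n, I.Mem n ∧ AtomChar A n w := by
  constructor
  · rintro (⟨l, hl, hlo, hhi, rfl⟩ | ⟨hopt, rfl⟩)
    · exact ⟨l.length, Or.inl ⟨hlo, hhi⟩, sum_atomChar hnd l hl⟩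
    · refine ⟨0, Or.inr ⟨hopt, rfl⟩, ?_, fun a _ => rfl⟩
      intro p _; exact ⟨fun _ => rfl, fun _ => Nat.le_refl _⟩
  · rintro ⟨n, hmem, hchar⟩
    rcases hmem with ⟨h1, h2⟩ | ⟨hopt, rfl⟩
    · obtain ⟨l, hl, hlen, hsum⟩ := atomChar_build hnd n w hchar
      exact Or.inl ⟨l, hl, by rw [hlen]; exact h1, by rw [hlen]; exact h2, hsum⟩
    · exact Or.inr ⟨hopt, atomChar_zero hchar⟩

lemma atom_supp {A : Atom σ} {w : UWord σ} (h : w ∈ Atom.lang A) {a : σ}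
    (ha : a ∉ atomSyms A) : w a = 0 := by
  induction A generalizing w with
  | nil => have : w = UWord.zero := h; subst this; rfl
  | cons p A ih =>
    obtain ⟨w₁, hw₁, w₂, hw₂, rfl⟩ := h
    have ha1 : a ≠ p.1 := fun hc => ha (by simp [atomSyms, hc])
    have ha2 : a ∉ atomSyms A := fun hc => ha (by simp [atomSyms] at hc ⊢; exact Or.inr hc)
    have h1 : w₁ a = 0 := by
      by_cases hb : p.2 = true
      · have : w₁ = UWord.single p.1 := by simpa [atomEntryLang, hb] using hw₁
        subst this; simp [UWord.single, ha1]
      · have : w₁ ∈ ({UWord.single p.1, UWord.zero} : Set (UWord σ)) := by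
          simpa [atomEntryLang, hb] using hw₁
        rcases this with rfl | rfl
        · simp [UWord.single, ha1]
        · rfl
    have h2 : w₂ a = 0 := ih hw₂ ha2
    simp [UWord.add, h1, h2]

lemma listSum_supp {l : List (UWord σ)} {a : σ} (h : ∀ x ∈ l, x a = 0) :
    listSum l a = 0 := by
  induction l with
  | nil => rfl
  | cons x l ih =>
    simp [listSum_cons, UWord.add, h x (List.mem_cons_self),
      ih (fun y hy => h y (List.mem_cons_of_mem _ hy))]

lemma iter_supp {L : Set (UWord σ)} {I : Iv} {a : σ} (hL : ∀ u ∈ L, u a = 0)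
    {w : UWord σ} (h : w ∈ iterLang L I) : w a = 0 := by
  rcases h with ⟨l, hl, -, -, rfl⟩ | ⟨-, rfl⟩
  · exact listSum_supp (fun x hx => hL x (hl x hx))
  · rfl

lemma clause_supp {D : Clause σ} {w : UWord σ} (h : w ∈ Clause.lang D) {a : σ}
    (ha : a ∉ clauseSyms D) : w a = 0 := by
  obtain ⟨p, hp, hiter⟩ := h
  have : a ∉ atomSyms p.1 := fun hc => ha (List.mem_flatMap.2 ⟨p, hp, hc⟩)
  exact iter_supp (fun u hu => atom_supp hu this) hiter

lemma listSum_le {l : List (UWord σ)} {a b : σ} (h : ∀ x ∈ l, x b ≤ x a) :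
    listSum l b ≤ listSum l a := by
  induction l with
  | nil => exact Nat.le_refl _
  | cons x l ih =>
    have := h x (List.mem_cons_self)
    have := ih (fun y hy => h y (List.mem_cons_of_mem _ hy))
    simp [listSum_cons, UWord.add]; omega

lemma iter_le {L : Set (UWord σ)} {I : Iv} {a b : σ} (h : ∀ u ∈ L, u b ≤ u a) :
    ∀ w ∈ iterLang L I, w b ≤ w a := by
  rintro w (⟨l, hl, -, -, rfl⟩ | ⟨-, rfl⟩)
  · exact listSum_le (fun x hx => h x (hl x hx))
  · exact Nat.le_refl _

lemma flatMap_nodup_mem {α β : Type*} {l : List α} {f : α → List β}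
    (h : (l.flatMap f).Nodup) {x : α} (hx : x ∈ l) : (f x).Nodup := by
  induction l with
  | nil => cases hx
  | cons y l ih =>
    rw [List.flatMap_cons, List.nodup_append] at h
    rcases List.mem_cons.1 hx with rfl | hx'
    · exact h.1
    · exact ih h.2.1 hx'

lemma flatMap_nodup_eq {α β : Type*} {l : List α} {f : α → List β}
    (h : (l.flatMap f).Nodup) {x y : α} {a : β} (hx : x ∈ l) (hy : y ∈ l)
    (hax : a ∈ f x) (hay : a ∈ f y) : x = y := by
  induction l with
  | nil => cases hx
  | cons z l ih =>
    rw [List.flatMap_cons, List.nodup_append] at h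
    rcases List.mem_cons.1 hx with rfl | hx' <;> rcases List.mem_cons.1 hy with rfl | hy'
    · rfl
    · exact absurd (List.mem_flatMap.2 ⟨y, hy', hay⟩) (fun hc => h.2.2 _ hax _ hc rfl)
    · exact absurd (List.mem_flatMap.2 ⟨x, hx', hax⟩) (fun hc => h.2.2 _ hay _ hc rfl)
    · exact ih h.2.1 hx' hy'

lemma clause_count_le {D : Clause σ} (hnd : (clauseSyms D).Nodup)
    {A : Atom σ} {IA : Iv} (hA : (A, IA) ∈ D) {a : σ} (ha : (a, true) ∈ A)
    {c : σ} {fc : Bool} (hc : (c, fc) ∈ A) :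
    ∀ u ∈ Clause.lang D, u c ≤ u a := by
  rintro u ⟨⟨A', I'⟩, hA', hiter⟩
  have hnd' : (atomSyms A').Nodup := flatMap_nodup_mem hnd hA'
  obtain ⟨m, -, hch, hout⟩ := (mem_iter_atom hnd').1 hiter
  by_cases hcA' : c ∈ atomSyms A'
  · have hcA : c ∈ atomSyms A := List.mem_map.2 ⟨(c, fc), hc, rfl⟩
    have heq : ((A', I') : Atom σ × Iv) = (A, IA) :=
      flatMap_nodup_eq hnd hA' hA hcA' hcA
    obtain ⟨h1, h2⟩ := Prod.mk.injEq .. ▸ heq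
    subst h1; subst h2
    have hua : u a = m := (hch (a, true) ha).1 rfl
    have huc : u c ≤ m := by
      cases fc
      · exact (hch (c, false) hc).2 rfl
      · exact Nat.le_of_eq ((hch (c, true) hc).1 rfl)
    omega
  · rw [hout c hcA']; exact Nat.zero_le _

lemma Iv.mem_max {I : Iv} {m n : ℕ} (hm : I.Mem m) (hn : I.Mem n) :
    I.Mem (max m n) := by
  rcases hm with ⟨h1, h2⟩ | ⟨ho, rfl⟩
  · rcases hn with ⟨h3, h4⟩ | ⟨ho, rfl⟩
    · refine Or.inl ⟨le_trans h1 (le_max_left _ _), ?_⟩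
      rcases Nat.le_total m n with h | h
      · rwa [max_eq_right h]
      · rwa [max_eq_left h]
    · rw [max_eq_left (Nat.zero_le m)]; exact Or.inl ⟨h1, h2⟩
  · simpa using hn

lemma mem_iter_hi_one {L : Set (UWord σ)} {I : Iv} (hhi : I.hi ≤ 1) {w : UWord σ}
    (h : w ∈ iterLang L I) : w = UWord.zero ∨ w ∈ L := by
  rcases h with ⟨l, hl, -, hhi', rfl⟩ | ⟨-, rfl⟩
  · match l, hl, hhi' with
    | [], _, _ => exact Or.inl rfl
    | [u], hl, _ =>
      right
      rw [listSum_cons, listSum_nil, add_zero']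
      exact hl u (List.mem_cons_self)
    | u :: v :: l, _, hhi' =>
      exfalso
      have h2 : ((l.length + 2 : ℕ) : ℕ∞) ≤ 1 := le_trans (by exact_mod_cast hhi') hhi
      have h3 : (l.length + 2 : ℕ) ≤ 1 := by exact_mod_cast h2
      omega
  · exact Or.inl rfl

lemma mem_iter_single {L : Set (UWord σ)} {I : Iv} (hlo : I.lo ≤ 1)
    (hhi : (1 : ℕ∞) ≤ I.hi) {w : UWord σ} (h : w ∈ L) : w ∈ iterLang L I := by
  refine Or.inl ⟨[w], by simpa using h, by simpa using hlo, by simpa using hhi, ?_⟩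
  rw [listSum_cons, listSum_nil, add_zero']

lemma sat_nonempty {L : Set (UWord σ)} {w : UWord σ} (h : SatTuple L w) :
    L.Nonempty := by
  by_contra hne
  obtain ⟨a, ha, -⟩ := h.2.2.1 ∅ (fun u hu => absurd ⟨u, hu⟩ hne)
  exact ha

lemma sat_zero_mem {L : Set (UWord σ)} (h : SatTuple L UWord.zero) :
    UWord.zero ∈ L := by
  by_contra hz
  have hP : Set.univ ∈ Pset L := by
    intro u hu
    by_contra hc
    push_neg at hc
    have : u = UWord.zero := funext fun a => by simpa [UWord.zero] using hc a (Set.mem_univ a)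
    exact hz (this ▸ hu)
  obtain ⟨a, -, ha⟩ := h.2.2.1 _ hP
  exact ha rfl

lemma sat_nwit {L : Set (UWord σ)} {w : UWord σ} (h : SatTuple L w) (a : σ) :
    ∃ u ∈ L, u a = w a := h.2.1 a

lemma mem_sat {L : Set (UWord σ)} {w : UWord σ} (h : w ∈ L) : SatTuple L w :=
  ⟨fun p hp => hp w h, fun a => ⟨w, h, rfl⟩, fun X hX => hX w h, fun p hp => hp w h⟩


lemma witness_atom {D : Clause σ} (hnd : (clauseSyms D).Nodup) {A : Atom σ} {IA : Iv}
    (hAD : (A, IA) ∈ D) {c : σ} (hc : c ∈ atomSyms A) {u : UWord σ}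
    (hu : u ∈ Clause.lang D) (huc : u c ≠ 0) :
    u ∈ iterLang (Atom.lang A) IA := by
  obtain ⟨⟨A', I'⟩, hA'D, hit⟩ := hu
  have hcA' : c ∈ atomSyms A' := by
    by_contra h
    exact huc (iter_supp (fun x hx => atom_supp hx h) hit)
  have heq : ((A', I') : Atom σ × Iv) = (A, IA) :=
    flatMap_nodup_eq hnd hA'D hAD hcA' hc
  obtain ⟨h1, h2⟩ := Prod.mk.injEq .. ▸ heq
  subst h1; subst h2
  exact hit

lemma exists_bound {I : Iv} (m₀ : ℕ) (h₀ : I.Mem m₀) (A : Atom σ) (w : UWord σ)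
    (h : ∀ p ∈ A, ∃ m, I.Mem m ∧ w p.1 ≤ m) :
    ∃ n, I.Mem n ∧ ∀ p ∈ A, w p.1 ≤ n := by
  induction A with
  | nil => exact ⟨m₀, h₀, by simp⟩
  | cons p A ih =>
    obtain ⟨n, hn, hb⟩ := ih (fun q hq => h q (List.mem_cons_of_mem _ hq))
    obtain ⟨m, hm, hpm⟩ := h p (List.mem_cons_self)
    refine ⟨max m n, Iv.mem_max hm hn, ?_⟩
    intro q hq
    rcases List.mem_cons.1 hq with rfl | hq'
    · exact le_trans hpm (le_max_left _ _)
    · exact le_trans (hb q hq') (le_max_right _ _)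

lemma mem_flag_of_mem_syms {A : Atom σ} {a : σ} (h : a ∈ atomSyms A) :
    ∃ f : Bool, (a, f) ∈ A := by
  obtain ⟨⟨b, f⟩, hp, hfst⟩ := List.mem_map.1 h
  cases hfst
  exact ⟨f, hp⟩

lemma clause_sat_one {D : Clause σ} (hnd : (clauseSyms D).Nodup) {I : Iv}
    (hI : I = Iv.one ∨ I = Iv.qmark) {w : UWord σ}
    (hsat : SatTuple (iterLang (Clause.lang D) I) w) :
    w ∈ iterLang (Clause.lang D) I := by
  have hlo : I.lo ≤ 1 := by rcases hI with rfl | rfl <;> simp [Iv.one, Iv.qmark]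
  have hhi1 : I.hi ≤ 1 := by rcases hI with rfl | rfl <;> simp [Iv.one, Iv.qmark]
  have hhi : (1 : ℕ∞) ≤ I.hi := by rcases hI with rfl | rfl <;> simp [Iv.one, Iv.qmark]
  by_cases hw0 : ∀ a, w a = 0
  · have hz : w = UWord.zero := funext hw0
    rw [hz] at hsat ⊢
    exact sat_zero_mem hsat
  push_neg at hw0
  obtain ⟨a₀, ha₀⟩ := hw0
  obtain ⟨v, hv, hva⟩ := sat_nwit hsat a₀
  have hv' : v ∈ Clause.lang D := by
    rcases mem_iter_hi_one hhi1 hv with rfl | h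
    · exact absurd hva (by intro h; exact ha₀ h.symm)
    · exact h
  obtain ⟨⟨A, IA⟩, hAD, hviter⟩ := hv'
  have hndA : (atomSyms A).Nodup := flatMap_nodup_mem hnd hAD
  have ha₀A : a₀ ∈ atomSyms A := by
    by_contra hc
    have : v a₀ = 0 := iter_supp (fun x hx => atom_supp hx hc) hviter
    rw [this] at hva; exact ha₀ hva.symm
  -- any witness with nonzero count at a symbol of A is in iterLang (Atom.lang A) IA
  have hwit : ∀ {c : σ}, c ∈ atomSyms A → ∀ {u : UWord σ},
      u ∈ iterLang (Clause.lang D) I → u c ≠ 0 → u ∈ iterLang (Atom.lang A) IA := by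
    intro c hc u hu huc
    rcases mem_iter_hi_one hhi1 hu with rfl | hu'
    · exact absurd rfl huc
    · exact witness_atom hnd hAD hc hu' huc
  -- support of w within atomSyms A
  have hsupp : ∀ b, b ∉ atomSyms A → w b = 0 := by
    intro b hb
    by_contra hwb
    have hC : (a₀, b) ∈ Cset (iterLang (Clause.lang D) I) := by
      rintro u hu ⟨hua, hub⟩
      have := hwit ha₀A hu hua
      obtain ⟨m, -, -, hout⟩ := (mem_iter_atom hndA).1 this
      exact hub (hout b hb)
    exact hsat.1 (a₀, b) hC ⟨ha₀, hwb⟩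
  -- K facts
  have hK : ∀ aR, (aR, true) ∈ A → ∀ c fc, (c, fc) ∈ A → w c ≤ w aR := by
    intro aR haR c fc hc
    exact hsat.2.2.2 (aR, c) (fun u hu => iter_le (clause_count_le hnd hAD haR hc) u hu)
  -- existence of some Mem value
  obtain ⟨m₀, hm₀, -⟩ := (mem_iter_atom hndA).1 hviter
  by_cases hreq : ∃ q ∈ A, q.2 = true
  · obtain ⟨⟨a₁, f₁⟩, ha₁, hf₁⟩ := hreq
    simp only at hf₁
    subst hf₁
    have hn0 : w a₁ ≠ 0 := by
      intro h0
      obtain ⟨f₀, hf₀⟩ := mem_flag_of_mem_syms ha₀A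
      have := hK a₁ ha₁ a₀ f₀ hf₀
      omega
    obtain ⟨v₁, hv₁, hv₁a⟩ := sat_nwit hsat a₁
    have hv₁iter : v₁ ∈ iterLang (Atom.lang A) IA :=
      hwit (List.mem_map.2 ⟨(a₁, true), ha₁, rfl⟩) hv₁ (by rw [hv₁a]; exact hn0)
    obtain ⟨m, hmem, hch, -⟩ := (mem_iter_atom hndA).1 hv₁iter
    have hmn : m = w a₁ := by rw [← hv₁a]; exact ((hch (a₁, true) ha₁).1 rfl).symm
    rw [hmn] at hmem
    have hchar : AtomChar A (w a₁) w := by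
      refine ⟨?_, hsupp⟩
      intro q hq
      constructor
      · intro hb
        have h1 := hK a₁ ha₁ q.1 q.2 hq
        have h2 := hK q.1 (by rw [← hb]; exact hq) a₁ true ha₁
        omega
      · intro hb
        exact hK a₁ ha₁ q.1 q.2 hq
    exact mem_iter_single hlo hhi ⟨(A, IA), hAD, (mem_iter_atom hndA).2 ⟨w a₁, hmem, hchar⟩⟩
  · push_neg at hreq
    have hallopt : ∀ q ∈ A, q.2 = false := fun q hq => by
      cases h : q.2
      · rfl
      · exact absurd h (hreq q hq)
    have hwitb : ∀ p ∈ A, ∃ m, IA.Mem m ∧ w p.1 ≤ m := by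
      intro p hp
      by_cases hwp : w p.1 = 0
      · exact ⟨m₀, hm₀, by omega⟩
      · obtain ⟨u, hu, hua⟩ := sat_nwit hsat p.1
        have huiter : u ∈ iterLang (Atom.lang A) IA :=
          hwit (List.mem_map.2 ⟨p, hp, rfl⟩) hu (by rw [hua]; exact hwp)
        obtain ⟨m, hm, hch, -⟩ := (mem_iter_atom hndA).1 huiter
        refine ⟨m, hm, ?_⟩
        rw [← hua]
        exact (hch p hp).2 (hallopt p hp)
    obtain ⟨n, hn, hbd⟩ := exists_bound m₀ hm₀ A w hwitb
    have hchar : AtomChar A n w := by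
      refine ⟨?_, hsupp⟩
      intro q hq
      exact ⟨fun hb => absurd hb (by simp [hallopt q hq]), fun _ => hbd q hq⟩
    exact mem_iter_single hlo hhi ⟨(A, IA), hAD, (mem_iter_atom hndA).2 ⟨n, hn, hchar⟩⟩

/-- Restriction of a word to a list of symbols. -/
def wres (w : UWord σ) (S : List σ) : UWord σ := fun a => if a ∈ S then w a else 0

lemma clause_build :
    ∀ (D : Clause σ), (clauseSyms D).Nodup →
    (∀ p ∈ D, p.2.lo ≤ 1 ∧ (1 : ℕ∞) ≤ p.2.hi) →
    ∀ (w : UWord σ), (∀ b, b ∉ clauseSyms D → w b = 0) →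
    (∀ p ∈ D, ∃ n, AtomChar p.1 n (wres w (atomSyms p.1))) →
    ∃ l : List (UWord σ), (∀ x ∈ l, x ∈ Clause.lang D) ∧ w = listSum l := by
  intro D
  induction D with
  | nil =>
    intro _ _ w hsupp _
    refine ⟨[], by simp, ?_⟩
    funext a
    exact hsupp a (by simp [clauseSyms])
  | cons p D' ih =>
    obtain ⟨A, IA⟩ := p
    intro hnd hlohi w hsupp hatom
    rw [clauseSyms_cons, List.nodup_append] at hnd
    obtain ⟨hndA, hndD', hdisj⟩ := hnd
    obtain ⟨n, hch⟩ := hatom (A, IA) (List.mem_cons_self)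
    obtain ⟨l₁, hl₁, -, hsum₁⟩ := atomChar_build hndA n _ hch
    set w₂ : UWord σ := fun a => if a ∈ atomSyms A then 0 else w a with hw₂
    have hsupp₂ : ∀ b, b ∉ clauseSyms D' → w₂ b = 0 := by
      intro b hb
      by_cases h : b ∈ atomSyms A
      · simp [hw₂, h]
      · have : b ∉ clauseSyms ((A, IA) :: D') := by
          rw [clauseSyms_cons]; simp [h, hb]
        simp only [hw₂, if_neg h]
        exact hsupp b this
    have hatom₂ : ∀ q ∈ D', ∃ n, AtomChar q.1 n (wres w₂ (atomSyms q.1)) := by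
      intro q hq
      have heqres : wres w₂ (atomSyms q.1) = wres w (atomSyms q.1) := by
        funext a
        by_cases h : a ∈ atomSyms q.1
        · have haD' : a ∈ clauseSyms D' := List.mem_flatMap.2 ⟨q, hq, h⟩
          have : a ∉ atomSyms A := fun hc => hdisj _ hc _ haD' rfl
          simp [wres, hw₂, h, this]
        · simp [wres, h]
      rw [heqres]
      exact hatom q (List.mem_cons_of_mem _ hq)
    obtain ⟨l₂, hl₂, hsum₂⟩ := ih hndD'
      (fun q hq => hlohi q (List.mem_cons_of_mem _ hq)) w₂ hsupp₂ hatom₂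
    refine ⟨l₁ ++ l₂, ?_, ?_⟩
    · intro x hx
      rcases List.mem_append.1 hx with hx | hx
      · obtain ⟨h1, h2⟩ := hlohi (A, IA) (List.mem_cons_self)
        exact ⟨(A, IA), List.mem_cons_self, mem_iter_single h1 h2 (hl₁ x hx)⟩
      · obtain ⟨q, hq, hiter⟩ := hl₂ x hx
        exact ⟨q, List.mem_cons_of_mem _ hq, hiter⟩
    · rw [listSum_append, ← hsum₁, ← hsum₂]
      funext a
      by_cases h : a ∈ atomSyms A
      · simp [UWord.add, wres, hw₂, h]
      · simp [UWord.add, wres, hw₂, h]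

lemma clause_sat_star {D : Clause σ} (hnd : (clauseSyms D).Nodup)
    (hs : Clause.Simple D) {I : Iv} (hI : I = Iv.iplus ∨ I = Iv.istar) {w : UWord σ}
    (hsat : SatTuple (iterLang (Clause.lang D) I) w) :
    w ∈ iterLang (Clause.lang D) I := by
  by_cases hw0 : ∀ a, w a = 0
  · have hz : w = UWord.zero := funext hw0
    rw [hz] at hsat ⊢
    exact sat_zero_mem hsat
  push_neg at hw0
  have hsupp : ∀ b, b ∉ clauseSyms D → w b = 0 := by
    intro b hb
    obtain ⟨u, hu, hub⟩ := sat_nwit hsat b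
    rw [← hub]
    exact iter_supp (fun x hx => clause_supp hx hb) hu
  have hK : ∀ A IA, (A, IA) ∈ D → ∀ aR, (aR, true) ∈ A →
      ∀ c fc, (c, fc) ∈ A → w c ≤ w aR := by
    intro A IA hAD aR haR c fc hc
    exact hsat.2.2.2 (aR, c) (fun u hu => iter_le (clause_count_le hnd hAD haR hc) u hu)
  have hatom : ∀ p ∈ D, ∃ n, AtomChar p.1 n (wres w (atomSyms p.1)) := by
    rintro ⟨A, IA⟩ hAD
    have hndA : (atomSyms A).Nodup := flatMap_nodup_mem hnd hAD
    by_cases hreq : ∃ q ∈ A, q.2 = true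
    · obtain ⟨⟨a₁, f₁⟩, ha₁, hf₁⟩ := hreq
      simp only at hf₁
      subst hf₁
      refine ⟨w a₁, ?_, ?_⟩
      · intro q hq
        have hqmem : q.1 ∈ atomSyms A := List.mem_map.2 ⟨q, hq, rfl⟩
        constructor
        · intro hb
          have h1 := hK A IA hAD a₁ ha₁ q.1 q.2 hq
          have h2 := hK A IA hAD q.1 (by rw [← hb]; exact hq) a₁ true ha₁
          simp only [wres, if_pos hqmem]
          omega
        · intro hb
          have h1 := hK A IA hAD a₁ ha₁ q.1 q.2 hq
          simp only [wres, if_pos hqmem]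
          omega
      · intro a ha; simp [wres, ha]
    · push_neg at hreq
      have hallopt : ∀ q ∈ A, q.2 = false := fun q hq => by
        cases h : q.2
        · rfl
        · exact absurd h (hreq q hq)
      refine ⟨(A.map fun q => w q.1).foldr max 0, ?_, ?_⟩
      · intro q hq
        have hqmem : q.1 ∈ atomSyms A := List.mem_map.2 ⟨q, hq, rfl⟩
        constructor
        · intro hb; exact absurd hb (by simp [hallopt q hq])
        · intro _
          simp only [wres, if_pos hqmem]
          -- w q.1 ≤ foldr max 0
          have : ∀ (l : List ℕ) (x : ℕ), x ∈ l → x ≤ l.foldr max 0 := by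
            intro l
            induction l with
            | nil => intro x hx; cases hx
            | cons y l ihl =>
              intro x hx
              rcases List.mem_cons.1 hx with rfl | hx'
              · exact le_max_left _ _
              · exact le_trans (ihl x hx') (le_max_right _ _)
          exact this _ _ (List.mem_map.2 ⟨q, hq, rfl⟩)
      · intro a ha; simp [wres, ha]
  have hlohi : ∀ p ∈ D, p.2.lo ≤ 1 ∧ (1 : ℕ∞) ≤ p.2.hi := by
    intro p hp
    rcases hs p hp with h | h <;> rw [h] <;> simp [Iv.one, Iv.qmark]
  obtain ⟨l, hl, hsum⟩ := clause_build D hnd hlohi w hsupp hatom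
  have hlne : l ≠ [] := by
    intro h
    subst h
    obtain ⟨a, ha⟩ := hw0
    exact ha (by rw [hsum]; rfl)
  have hlen : 1 ≤ l.length := List.length_pos_iff.2 hlne
  refine Or.inl ⟨l, hl, ?_, ?_, hsum⟩
  · rcases hI with rfl | rfl
    · simpa [Iv.iplus] using hlen
    · simp [Iv.istar]
  · rcases hI with rfl | rfl <;> simp [Iv.iplus, Iv.istar]



lemma listConcLang_cons {α : Type*} (f : α → Set (UWord σ)) (x : α) (xs : List α) :
    listConcLang f (x :: xs) =
      {w | ∃ w₁ ∈ f x, ∃ w₂ ∈ listConcLang f xs, w = w₁.add w₂} := rfl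

lemma sat_split {L₁ L₂ : Set (UWord σ)} {S : List σ}
    (h₁ : ∀ u ∈ L₁, ∀ a, a ∉ S → u a = 0)
    (h₂ : ∀ u ∈ L₂, ∀ a, a ∈ S → u a = 0)
    (hn₁ : L₁.Nonempty) (hn₂ : L₂.Nonempty) {w : UWord σ}
    (hsat : SatTuple {v | ∃ u₁ ∈ L₁, ∃ u₂ ∈ L₂, v = u₁.add u₂} w) :
    SatTuple L₁ (wres w S) ∧ SatTuple L₂ (fun a => if a ∈ S then 0 else w a) := by
  set L : Set (UWord σ) := {v | ∃ u₁ ∈ L₁, ∃ u₂ ∈ L₂, v = u₁.add u₂} with hLdef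
  constructor
  · refine ⟨?_, ?_, ?_, ?_⟩
    · rintro ⟨a, b⟩ hp ⟨ha, hb⟩
      by_cases haS : a ∈ S
      swap
      · exact ha (by simp [wres, haS])
      by_cases hbS : b ∈ S
      swap
      · exact hb (by simp [wres, hbS])
      have ha' : w a ≠ 0 := by simpa [wres, haS] using ha
      have hb' : w b ≠ 0 := by simpa [wres, hbS] using hb
      refine hsat.1 (a, b) ?_ ⟨ha', hb'⟩
      rintro u ⟨u₁, hu₁, u₂, hu₂, rfl⟩ ⟨hua, hub⟩
      have e1 : u₂ a = 0 := h₂ u₂ hu₂ a haS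
      have e2 : u₂ b = 0 := h₂ u₂ hu₂ b hbS
      have hua' : u₁ a + u₂ a ≠ 0 := hua
      have hub' : u₁ b + u₂ b ≠ 0 := hub
      refine hp u₁ hu₁ ⟨?_, ?_⟩
      · show u₁ a ≠ 0; omega
      · show u₁ b ≠ 0; omega
    · intro a
      by_cases haS : a ∈ S
      · obtain ⟨u, hu, hua⟩ := sat_nwit hsat a
        obtain ⟨u₁, hu₁, u₂, hu₂, rfl⟩ := hu
        refine ⟨u₁, hu₁, ?_⟩
        show u₁ a = wres w S a
        have e : u₂ a = 0 := h₂ u₂ hu₂ a haS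
        have hua' : u₁ a + u₂ a = w a := hua
        simp only [wres, if_pos haS]
        omega
      · obtain ⟨u₁, hu₁⟩ := hn₁
        refine ⟨u₁, hu₁, ?_⟩
        show u₁ a = wres w S a
        simp [wres, haS, h₁ u₁ hu₁ a haS]
    · intro X hX
      have hX' : {a | a ∈ X ∧ a ∈ S} ∈ Pset L := by
        rintro u ⟨u₁, hu₁, u₂, hu₂, rfl⟩
        obtain ⟨a, haX, ha⟩ := hX u₁ hu₁
        have haS : a ∈ S := by
          by_contra hc; exact ha (h₁ u₁ hu₁ a hc)
        refine ⟨a, ⟨haX, haS⟩, ?_⟩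
        show u₁ a + u₂ a ≠ 0
        omega
      obtain ⟨a, ⟨haX, haS⟩, hwa⟩ := hsat.2.2.1 _ hX'
      exact ⟨a, haX, by simpa [wres, haS] using hwa⟩
    · rintro ⟨a, b⟩ hp
      show wres w S b ≤ wres w S a
      by_cases hbS : b ∈ S
      · by_cases haS : a ∈ S
        · have hK : ((a, b) : σ × σ) ∈ Kset L := by
            rintro u ⟨u₁, hu₁, u₂, hu₂, rfl⟩
            show u₁ b + u₂ b ≤ u₁ a + u₂ a
            have e1 : u₂ b = 0 := h₂ u₂ hu₂ b hbS
            have e2 : u₂ a = 0 := h₂ u₂ hu₂ a haS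
            have e3 : u₁ b ≤ u₁ a := hp u₁ hu₁
            omega
          have := hsat.2.2.2 (a, b) hK
          simpa [wres, haS, hbS] using this
        · have hball : ∀ u ∈ L, u b = 0 := by
            rintro u ⟨u₁, hu₁, u₂, hu₂, rfl⟩
            have e1 : u₂ b = 0 := h₂ u₂ hu₂ b hbS
            have e2 : u₁ a = 0 := h₁ u₁ hu₁ a haS
            have e3 : u₁ b ≤ u₁ a := hp u₁ hu₁
            show u₁ b + u₂ b = 0
            omega
          obtain ⟨u, hu, hub⟩ := sat_nwit hsat b
          have : w b = 0 := by rw [← hub]; exact hball u hu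
          simp [wres, hbS, this]
      · simp [wres, hbS]
  · refine ⟨?_, ?_, ?_, ?_⟩
    · rintro ⟨a, b⟩ hp ⟨ha, hb⟩
      by_cases haS : a ∈ S
      · exact ha (by simp [haS])
      by_cases hbS : b ∈ S
      · exact hb (by simp [hbS])
      have ha' : w a ≠ 0 := by simpa [haS] using ha
      have hb' : w b ≠ 0 := by simpa [hbS] using hb
      refine hsat.1 (a, b) ?_ ⟨ha', hb'⟩
      rintro u ⟨u₁, hu₁, u₂, hu₂, rfl⟩ ⟨hua, hub⟩
      have e1 : u₁ a = 0 := h₁ u₁ hu₁ a haS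
      have e2 : u₁ b = 0 := h₁ u₁ hu₁ b hbS
      have hua' : u₁ a + u₂ a ≠ 0 := hua
      have hub' : u₁ b + u₂ b ≠ 0 := hub
      refine hp u₂ hu₂ ⟨?_, ?_⟩
      · show u₂ a ≠ 0; omega
      · show u₂ b ≠ 0; omega
    · intro a
      by_cases haS : a ∈ S
      · obtain ⟨u₂, hu₂⟩ := hn₂
        refine ⟨u₂, hu₂, ?_⟩
        show u₂ a = if a ∈ S then 0 else w a
        simp [haS, h₂ u₂ hu₂ a haS]
      · obtain ⟨u, hu, hua⟩ := sat_nwit hsat a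
        obtain ⟨u₁, hu₁, u₂, hu₂, rfl⟩ := hu
        refine ⟨u₂, hu₂, ?_⟩
        show u₂ a = if a ∈ S then 0 else w a
        have e : u₁ a = 0 := h₁ u₁ hu₁ a haS
        have hua' : u₁ a + u₂ a = w a := hua
        simp only [if_neg haS]
        omega
    · intro X hX
      have hX' : {a | a ∈ X ∧ a ∉ S} ∈ Pset L := by
        rintro u ⟨u₁, hu₁, u₂, hu₂, rfl⟩
        obtain ⟨a, haX, ha⟩ := hX u₂ hu₂
        have haS : a ∉ S := by
          intro hc; exact ha (h₂ u₂ hu₂ a hc)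
        refine ⟨a, ⟨haX, haS⟩, ?_⟩
        show u₁ a + u₂ a ≠ 0
        omega
      obtain ⟨a, ⟨haX, haS⟩, hwa⟩ := hsat.2.2.1 _ hX'
      exact ⟨a, haX, by simpa [haS] using hwa⟩
    · rintro ⟨a, b⟩ hp
      show (if b ∈ S then 0 else w b) ≤ (if a ∈ S then 0 else w a)
      by_cases hbS : b ∈ S
      · simp [hbS]
      by_cases haS : a ∈ S
      · have hball : ∀ u ∈ L, u b = 0 := by
          rintro u ⟨u₁, hu₁, u₂, hu₂, rfl⟩
          have e1 : u₁ b = 0 := h₁ u₁ hu₁ b hbS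
          have e2 : u₂ a = 0 := h₂ u₂ hu₂ a haS
          have e3 : u₂ b ≤ u₂ a := hp u₂ hu₂
          show u₁ b + u₂ b = 0
          omega
        obtain ⟨u, hu, hub⟩ := sat_nwit hsat b
        have : w b = 0 := by rw [← hub]; exact hball u hu
        simp [hbS, this]
      · have hK : ((a, b) : σ × σ) ∈ Kset L := by
          rintro u ⟨u₁, hu₁, u₂, hu₂, rfl⟩
          show u₁ b + u₂ b ≤ u₁ a + u₂ a
          have e1 : u₁ b = 0 := h₁ u₁ hu₁ b hbS
          have e2 : u₁ a = 0 := h₁ u₁ hu₁ a haS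
          have e3 : u₂ b ≤ u₂ a := hp u₂ hu₂
          omega
        have := hsat.2.2.2 (a, b) hK
        simpa [haS, hbS] using this

lemma conc_supp : ∀ (cl : List (Clause σ × Iv)) {u : UWord σ},
    u ∈ listConcLang (fun p => iterLang (Clause.lang p.1) p.2) cl →
    ∀ a, a ∉ cl.flatMap (fun p => clauseSyms p.1) → u a = 0 := by
  intro cl
  induction cl with
  | nil =>
    intro u hu a _
    rw [show u = UWord.zero from hu]; rfl
  | cons p cl ih =>
    rintro u ⟨u₁, hu₁, u₂, hu₂, rfl⟩ a ha
    rw [List.flatMap_cons, List.mem_append] at ha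
    push_neg at ha
    have e1 : u₁ a = 0 := iter_supp (fun x hx => clause_supp hx ha.1) hu₁
    have e2 : u₂ a = 0 := ih hu₂ a ha.2
    show u₁ a + u₂ a = 0
    omega

lemma sat_mem_list : ∀ (cl : List (Clause σ × Iv)),
    (∀ p ∈ cl, (Clause.Simple p.1 ∧ (p.2 = Iv.iplus ∨ p.2 = Iv.istar)) ∨
      (p.2 = Iv.one ∨ p.2 = Iv.qmark)) →
    (cl.flatMap fun p => clauseSyms p.1).Nodup →
    ∀ w : UWord σ,
    SatTuple (listConcLang (fun p => iterLang (Clause.lang p.1) p.2) cl) w →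
    w ∈ listConcLang (fun p => iterLang (Clause.lang p.1) p.2) cl := by
  intro cl
  induction cl with
  | nil =>
    intro _ _ w hsat
    have hz : ∀ a, w a = 0 := by
      intro a
      obtain ⟨u, hu, hua⟩ := sat_nwit hsat a
      rw [← hua, show u = UWord.zero from hu]; rfl
    show w = UWord.zero
    exact funext hz
  | cons p cl ih =>
    rintro hwf hnd w hsat
    obtain ⟨D, I⟩ := p
    rw [List.flatMap_cons, List.nodup_append] at hnd
    obtain ⟨hndD, hndcl, hdisj⟩ := hnd
    rw [listConcLang_cons] at hsat ⊢
    obtain ⟨u, hu⟩ := sat_nonempty hsat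
    obtain ⟨u₁, hu₁, u₂, hu₂, -⟩ := hu
    have h₁ : ∀ u ∈ iterLang (Clause.lang D) I, ∀ a, a ∉ clauseSyms D → u a = 0 :=
      fun u hu a ha => iter_supp (fun x hx => clause_supp hx ha) hu
    have h₂ : ∀ u ∈ listConcLang (fun p => iterLang (Clause.lang p.1) p.2) cl,
        ∀ a, a ∈ clauseSyms D → u a = 0 := by
      intro u hu a ha
      exact conc_supp cl hu a (fun hc => hdisj _ ha _ hc rfl)
    obtain ⟨hsat₁, hsat₂⟩ := sat_split h₁ h₂ ⟨u₁, hu₁⟩ ⟨u₂, hu₂⟩ hsat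
    have hw₁ : wres w (clauseSyms D) ∈ iterLang (Clause.lang D) I := by
      rcases hwf (D, I) (List.mem_cons_self) with ⟨hsimp, hI⟩ | hI
      · exact clause_sat_star hndD hsimp hI hsat₁
      · exact clause_sat_one hndD hI hsat₁
    have hw₂ := ih (fun q hq => hwf q (List.mem_cons_of_mem _ hq)) hndcl _ hsat₂
    refine ⟨wres w (clauseSyms D), hw₁, _, hw₂, ?_⟩
    funext a
    by_cases h : a ∈ clauseSyms D <;> simp [wres, UWord.add, h]

lemma sat_transfer {L' L : Set (UWord σ)} (h : TupleLE L' L) {w : UWord σ}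
    (hw : SatTuple L' w) : SatTuple L w :=
  ⟨fun p hp => hw.1 p (h.1 hp),
   fun a => h.2.1 (hw.2.1 a),
   fun X hX => hw.2.2.1 X (h.2.2.1 hX),
   fun p hp => hw.2.2.2 p (h.2.2.2 hp)⟩

lemma dime_sat_mem {E : DIME σ} (hE : E.WF) {w : UWord σ}
    (hsat : SatTuple (DIME.lang E) w) : w ∈ DIME.lang E := by
  have hnd : (E.clauses.flatMap fun p => clauseSyms p.1).Nodup := hE.2
  exact sat_mem_list E.clauses hE.1 hnd w hsat


end S4

/-- For any two DIMEs `E` and `E'`: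
`L(E') ⊆ L(E)` if and only if `Δ_{E'} ≼ Δ_E`. -/
theorem statement4 {σ : Type} [DecidableEq σ] [Fintype σ]
    (E E' : DIME σ) (hE : E.WF) (hE' : E'.WF) :
    DIME.lang E' ⊆ DIME.lang E ↔ TupleLE (DIME.lang E') (DIME.lang E) := by
  constructor
  · intro h
    refine ⟨?_, ?_, ?_, ?_⟩
    · exact fun p hp u hu => hp u (h hu)
    · rintro p ⟨u, hu, he⟩; exact ⟨u, h hu, he⟩
    · exact fun X hX u hu => hX u (h hu)
    · exact fun p hp u hu => hp u (h hu)
  · intro h w hw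
    exact S4.dime_sat_mem hE (S4.sat_transfer h (S4.mem_sat hw))
end
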